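/- arXiv:1703.07097 — 2 statements merged into one kernel-verified Lean document; each statement's English description precedes it below -/
import Mathlib

section
/- Let Γ be a z-knotted combinatorial triangulation with unique zigzag (x_1,…,x_n) (indices mod n). Then for every face F of Γ there are exactly three indices i with 1 ≤ i ≤ n such that {x_i, x_{i+1}, x_{i+2}} equals the vertex set of F, i.e., the unique zigzag passes through every face exactly thrice. -/
universe u v

/-- The data of an embedded graph: a simple graph together with a collection of
(triangular) faces, each face recorded as the finite set of its vertices. -/
structure PreTriangulation (V : Type u) where
  graph : SimpleGraph V
  faces : Set (Finset V)

namespace PreTriangulation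

variable {V : Type u} {V' : Type v}

/-- `T` is a combinatorial triangulation: a finite simple connected graph together with
a collection of faces, each face being a set of three pairwise adjacent vertices, such that
every edge lies in exactly two faces and two distinct faces share at most one edge. -/
structure IsTriangulation [DecidableEq V] (T : PreTriangulation V) : Prop where
  finiteVerts : Finite V
  connected : T.graph.Connected
  face_card : ∀ F ∈ T.faces, F.card = 3
  face_adj : ∀ F ∈ T.faces, ∀ x ∈ F, ∀ y ∈ F, x ≠ y → T.graph.Adj x y
  edge_in_two_faces : ∀ x y : V, T.graph.Adj x y →
    {F | F ∈ T.faces ∧ x ∈ F ∧ y ∈ F}.ncard = 2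
  faces_share_at_most_one_edge :
    ∀ F ∈ T.faces, ∀ G ∈ T.faces, F ≠ G → (F ∩ G).card ≤ 2

section

variable [DecidableEq V] [DecidableEq V']

/-- A zigzag in `T`: a cyclic sequence of vertices (encoded as a periodic function `ℤ → V`
whose minimal period `n` is the length of the zigzag, with `n > 3`) such that any two
consecutive vertices are distinct and adjacent, any three consecutive vertices lie in a
unique face, and the faces determined by two consecutive triples are distinct. -/
structure Zigzag (T : PreTriangulation V) where
  n : ℕ
  three_lt_n : 3 < n
  seq : ℤ → V
  periodic : ∀ i : ℤ, seq (i + n) = seq i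
  n_minimal : ∀ m : ℕ, 0 < m → (∀ i : ℤ, seq (i + m) = seq i) → n ≤ m
  seq_ne : ∀ i : ℤ, seq i ≠ seq (i + 1)
  seq_adj : ∀ i : ℤ, T.graph.Adj (seq i) (seq (i + 1))
  face : ℤ → Finset V
  face_mem : ∀ i : ℤ, face i ∈ T.faces
  subset_face : ∀ i : ℤ, ({seq i, seq (i + 1), seq (i + 2)} : Finset V) ⊆ face i
  face_unique : ∀ i : ℤ, ∀ G ∈ T.faces,
    ({seq i, seq (i + 1), seq (i + 2)} : Finset V) ⊆ G → G = face i
  face_ne : ∀ i : ℤ, face i ≠ face (i + 1)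

variable {T : PreTriangulation V}

/-- Two zigzags are equivalent if they agree up to a cyclic shift or up to a cyclic
shift combined with reversal. -/
def ZigzagEquiv (Z Z' : T.Zigzag) : Prop :=
  (∃ k : ℤ, ∀ i : ℤ, Z'.seq i = Z.seq (i + k)) ∨
  (∃ k : ℤ, ∀ i : ℤ, Z'.seq i = Z.seq (k - i))

/-- `T` is z-knotted: it has exactly one zigzag up to cyclic shift and reversal. -/
def ZKnotted (T : PreTriangulation V) [DecidableEq V] : Prop :=
  Nonempty T.Zigzag ∧ ∀ Z Z' : T.Zigzag, ZigzagEquiv Z Z'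

/-- `T` has exactly two zigzags up to cyclic shift and reversal. -/
def HasExactlyTwoZigzags (T : PreTriangulation V) [DecidableEq V] : Prop :=
  ∃ Z₁ Z₂ : T.Zigzag, ¬ ZigzagEquiv Z₁ Z₂ ∧
    ∀ Z : T.Zigzag, ZigzagEquiv Z Z₁ ∨ ZigzagEquiv Z Z₂

/-- `T` has exactly three zigzags up to cyclic shift and reversal. -/
def HasExactlyThreeZigzags (T : PreTriangulation V) [DecidableEq V] : Prop :=
  ∃ Z₁ Z₂ Z₃ : T.Zigzag, ¬ ZigzagEquiv Z₁ Z₂ ∧ ¬ ZigzagEquiv Z₁ Z₃ ∧ ¬ ZigzagEquiv Z₂ Z₃ ∧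
    ∀ Z : T.Zigzag, ZigzagEquiv Z Z₁ ∨ ZigzagEquiv Z Z₂ ∨ ZigzagEquiv Z Z₃

namespace Zigzag

/-- The zigzag passes from `x` to `y` (in this order) at some position. -/
def Passes (Z : T.Zigzag) (x y : V) : Prop :=
  ∃ i : ℤ, Z.seq i = x ∧ Z.seq (i + 1) = y

/-- The zigzag passes from `x` to `y` (in this order) at two distinct positions
of the cyclic sequence. -/
def PassesTwice (Z : T.Zigzag) (x y : V) : Prop :=
  ∃ i j : ℤ, (i : ZMod Z.n) ≠ (j : ZMod Z.n) ∧
    Z.seq i = x ∧ Z.seq (i + 1) = y ∧ Z.seq j = x ∧ Z.seq (j + 1) = y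

/-- The edge `{x, y}` is of first type: the zigzag contains both `x, y` and `y, x`
as pairs of consecutive vertices. -/
def FirstTypeEdge (Z : T.Zigzag) (x y : V) : Prop := Z.Passes x y ∧ Z.Passes y x

/-- The edge `{x, y}` is of second type: the zigzag contains the same ordered pair
(`x, y` or `y, x`) twice. -/
def SecondTypeEdge (Z : T.Zigzag) (x y : V) : Prop :=
  Z.PassesTwice x y ∨ Z.PassesTwice y x

/-- The number of positions of the cyclic sequence at which the pair of consecutive
vertices equals `{x, y}` (in either order). -/
noncomputable def passCount (Z : T.Zigzag) (x y : V) : ℕ :=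
  Nat.card {i : Fin Z.n //
    (Z.seq ((i : ℕ) : ℤ) = x ∧ Z.seq (((i : ℕ) : ℤ) + 1) = y) ∨
    (Z.seq ((i : ℕ) : ℤ) = y ∧ Z.seq (((i : ℕ) : ℤ) + 1) = x)}

/-- The number of positions of the cyclic sequence at which the triple of consecutive
vertices has vertex set equal to `F`. -/
noncomputable def faceCount (Z : T.Zigzag) (F : Finset V) : ℕ :=
  Nat.card {i : Fin Z.n //
    ({Z.seq ((i : ℕ) : ℤ), Z.seq (((i : ℕ) : ℤ) + 1), Z.seq (((i : ℕ) : ℤ) + 2)} :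
      Finset V) = F}

/-- The three consecutive vertices of the zigzag at position `i` are `x, y, z`. -/
def TripleAt (Z : T.Zigzag) (i : ℤ) (x y z : V) : Prop :=
  Z.seq i = x ∧ Z.seq (i + 1) = y ∧ Z.seq (i + 2) = z

/-- The zigzag has the cyclic form `x₁,y₁,z₁, …, x₂,y₂,z₂, …, x₃,y₃,z₃, …`:
the three triples occur in this cyclic order within one period. -/
def CyclicTriples (Z : T.Zigzag) (x₁ y₁ z₁ x₂ y₂ z₂ x₃ y₃ z₃ : V) : Prop :=
  ∃ (i : ℤ) (p q : ℕ), 0 < p ∧ p < q ∧ q < Z.n ∧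
    Z.TripleAt i x₁ y₁ z₁ ∧ Z.TripleAt (i + p) x₂ y₂ z₂ ∧ Z.TripleAt (i + q) x₃ y₃ z₃

/-- `F` is a `(1,1,2)`-face: exactly one of its three edges is of second type. -/
def Is112Face (Z : T.Zigzag) (F : Finset V) : Prop :=
  ∃ x y z : V, F = {x, y, z} ∧ x ≠ y ∧ x ≠ z ∧ y ≠ z ∧
    Z.SecondTypeEdge y z ∧ ¬ Z.SecondTypeEdge x y ∧ ¬ Z.SecondTypeEdge x z

/-- `F` is a `(2,2,2)`-face: all three of its edges are of second type. -/
def Is222Face (Z : T.Zigzag) (F : Finset V) : Prop :=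
  ∃ x y z : V, F = {x, y, z} ∧ x ≠ y ∧ x ≠ z ∧ y ≠ z ∧
    Z.SecondTypeEdge x y ∧ Z.SecondTypeEdge y z ∧ Z.SecondTypeEdge x z

/-- `F` is a `(1,1,2)`-face of odd type: with vertices `x, y, z`, where `{y, z}` is the
edge of second type and the zigzag twice passes from `y` to `z`, the zigzag has the
cyclic form `x,y,z, …, y,x,z, …, y,z,x, …`. -/
def Is112OddFace (Z : T.Zigzag) (F : Finset V) : Prop :=
  ∃ x y z : V, F = {x, y, z} ∧ x ≠ y ∧ x ≠ z ∧ y ≠ z ∧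
    Z.SecondTypeEdge y z ∧ ¬ Z.SecondTypeEdge x y ∧ ¬ Z.SecondTypeEdge x z ∧
    Z.PassesTwice y z ∧ Z.CyclicTriples x y z y x z y z x

/-- `F` is a `(1,1,2)`-face of even type: with vertices `x, y, z`, where `{y, z}` is the
edge of second type and the zigzag twice passes from `y` to `z`, the zigzag has the
cyclic form `x,y,z, …, y,z,x, …, y,x,z, …`. -/
def Is112EvenFace (Z : T.Zigzag) (F : Finset V) : Prop :=
  ∃ x y z : V, F = {x, y, z} ∧ x ≠ y ∧ x ≠ z ∧ y ≠ z ∧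
    Z.SecondTypeEdge y z ∧ ¬ Z.SecondTypeEdge x y ∧ ¬ Z.SecondTypeEdge x z ∧
    Z.PassesTwice y z ∧ Z.CyclicTriples x y z y z x y x z

/-- `F` is a `(2,2,2)`-face of first type: with vertices `x, y, z` such that the zigzag
twice passes from `x` to `y`, twice from `y` to `z` and twice from `z` to `x`, the
zigzag has the cyclic form `x,y,z, …, z,x,y, …, y,z,x, …`. -/
def Is222FirstFace (Z : T.Zigzag) (F : Finset V) : Prop :=
  ∃ x y z : V, F = {x, y, z} ∧ x ≠ y ∧ x ≠ z ∧ y ≠ z ∧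
    Z.PassesTwice x y ∧ Z.PassesTwice y z ∧ Z.PassesTwice z x ∧
    Z.CyclicTriples x y z z x y y z x

/-- `F` is a `(2,2,2)`-face of second type: with vertices `x, y, z` such that the zigzag
twice passes from `x` to `y`, twice from `y` to `z` and twice from `z` to `x`, the
zigzag has the cyclic form `x,y,z, …, y,z,x, …, z,x,y, …`. -/
def Is222SecondFace (Z : T.Zigzag) (F : Finset V) : Prop :=
  ∃ x y z : V, F = {x, y, z} ∧ x ≠ y ∧ x ≠ z ∧ y ≠ z ∧
    Z.PassesTwice x y ∧ Z.PassesTwice y z ∧ Z.PassesTwice z x ∧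
    Z.CyclicTriples x y z y z x z x y

/-- `a` is the vertex of the face `F` which does not lie on an edge of `F` of
second type. -/
def IsApex (Z : T.Zigzag) (F : Finset V) (a : V) : Prop :=
  a ∈ F ∧ ∀ y ∈ F, y ≠ a → ¬ Z.SecondTypeEdge a y

end Zigzag

end

section ConnectedSum

variable [DecidableEq V] [DecidableEq V']

/-- The map gluing `Γ'` onto `Γ`: a vertex of `F'` is sent to the corresponding
(under `g`) vertex of `F`, all other vertices of `Γ'` are kept. -/
noncomputable def glueMap [Nonempty V] (F : Finset V) (F' : Finset V') (g : V → V') (y : V') :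
    V ⊕ {y : V' // y ∉ F'} :=
  if h : y ∈ F' then Sum.inl (Function.invFunOn g ↑F y) else Sum.inr ⟨y, h⟩

/-- The connected sum `T #_g T'` of two triangulations along the faces `F` and `F'`,
via the identification `g` of the vertices of `F` with the vertices of `F'`:
the disjoint union of `T` and `T'` in which every vertex `v` of `F` is identified with
`g v` (and the edges of `F` are identified with the corresponding edges of `F'`),
whose faces are all faces of `T` other than `F` together with all faces of `T'`
other than `F'`. -/
noncomputable def connectedSum [Nonempty V] (T : PreTriangulation V) (T' : PreTriangulation V')
    (F : Finset V) (F' : Finset V') (g : V → V') :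
    PreTriangulation (V ⊕ {y : V' // y ∉ F'}) where
  graph :=
    { Adj := fun u v => u ≠ v ∧
        ((∃ x y : V, T.graph.Adj x y ∧ u = Sum.inl x ∧ v = Sum.inl y) ∨
         (∃ x y : V', T'.graph.Adj x y ∧ u = glueMap F F' g x ∧ v = glueMap F F' g y))
      symm := ⟨by
        rintro u v ⟨hne, h⟩
        refine ⟨hne.symm, ?_⟩
        rcases h with ⟨x, y, hxy, hu, hv⟩ | ⟨x, y, hxy, hu, hv⟩
        · exact Or.inl ⟨y, x, hxy.symm, hv, hu⟩
        · exact Or.inr ⟨y, x, hxy.symm, hv, hu⟩⟩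
      loopless := ⟨fun u h => h.1 rfl⟩ }
  faces :=
    {G | (∃ A ∈ T.faces, A ≠ F ∧ G = A.image Sum.inl) ∨
         (∃ A ∈ T'.faces, A ≠ F' ∧ G = A.image (glueMap F F' g))}

end ConnectedSum

/-- `T` and `T'` are isomorphic as graphs together with their collections of faces. -/
def IsIsoTo [DecidableEq V'] (T : PreTriangulation V) (T' : PreTriangulation V') : Prop :=
  ∃ e : V ≃ V', (∀ x y : V, T.graph.Adj x y ↔ T'.graph.Adj (e x) (e y)) ∧
    (∀ G : Finset V, G ∈ T.faces ↔ G.image e ∈ T'.faces)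

/-- The bipyramid `BP n`.  The two apices `a, b` are `Sum.inl true, Sum.inl false`;
the vertices `1, …, n` of the `n`-gon are `Sum.inr 0, …, Sum.inr (n-1)` (that is, the
paper's vertex `i` is `Sum.inr (i - 1)`). -/
def bp (n : ℕ) : PreTriangulation (Bool ⊕ ZMod n) where
  graph :=
    { Adj := fun u v =>
        match u, v with
        | Sum.inl _, Sum.inl _ => False
        | Sum.inl _, Sum.inr _ => True
        | Sum.inr _, Sum.inl _ => True
        | Sum.inr i, Sum.inr j => i ≠ j ∧ (j = i + 1 ∨ i = j + 1)
      symm := ⟨by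
        rintro (s | i) (t | j) h
        · exact h.elim
        · trivial
        · trivial
        · exact ⟨h.1.symm, h.2.symm⟩⟩
      loopless := ⟨by
        rintro (s | i) h
        · exact h
        · exact h.1 rfl⟩ }
  faces := {G | ∃ (s : Bool) (i : ZMod n), G = {Sum.inl s, Sum.inr i, Sum.inr (i + 1)}}

/-- The complete graph on four vertices regarded as a combinatorial triangulation whose
faces are all four 3-element vertex subsets. -/
def k4 : PreTriangulation (Fin 4) where
  graph := ⊤
  faces := {G | G.card = 3}

/-- The cyclic sequence `a, 1+c, 2+c, b, 3+c, 4+c, …, a, n-1+c, n+c, b, 1+c, 2+c, a, 3+c, 4+c,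
…, b, n-1+c, n+c` in the bipyramid `BP n` (for `n` even), of length `3 n`, written in the
paper's labels; `c` is an offset.  Here `a = Sum.inl true`, `b = Sum.inl false` and the
paper's vertex `i` is `Sum.inr (i - 1)`. -/
def bpZigSeq (n : ℕ) (c : ZMod n) : ℤ → Bool ⊕ ZMod n := fun i =>
  let j : ℕ := (i % (3 * (n : ℤ))).toNat
  if j % 3 = 0 then Sum.inl (decide (j / 3 % 2 = 0))
  else Sum.inr (((2 * (j / 3) + (if j % 3 = 1 then 0 else 1) : ℕ) : ZMod n) + c)

end PreTriangulation

open PreTriangulation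

namespace ZKAux

open PreTriangulation

variable {V : Type u} [DecidableEq V] {T : PreTriangulation V}

/-- The vertex set of an ordered triple. -/
def fsv (p : V × V × V) : Finset V := {p.1, p.2.1, p.2.2}

lemma fsv_comm (p : V × V × V) : fsv (p.2.2, p.2.1, p.1) = fsv p := by
  ext v; simp [fsv]; tauto

lemma card3_of_distinct {x y z : V} (hxy : x ≠ y) (hxz : x ≠ z) (hyz : y ≠ z) :
    ({x, y, z} : Finset V).card = 3 := by
  rw [Finset.card_insert_of_notMem (by simp [hxy, hxz]), Finset.card_pair hyz]

lemma distinct_of_card3 {x y z : V} (h : ({x, y, z} : Finset V).card = 3) :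
    x ≠ y ∧ x ≠ z ∧ y ≠ z := by
  refine ⟨?_, ?_, ?_⟩ <;> rintro rfl
  · have he : ({x, x, z} : Finset V) = {x, z} := by ext v; simp; try tauto
    rw [he] at h
    have := Finset.card_insert_le x ({z} : Finset V)
    simp at this; omega
  · have he : ({x, y, x} : Finset V) = {x, y} := by ext v; simp; try tauto
    rw [he] at h
    have := Finset.card_insert_le x ({y} : Finset V)
    simp at this; omega
  · have he : ({x, y, y} : Finset V) = {x, y} := by ext v; simp; try tauto
    rw [he] at h
    have := Finset.card_insert_le x ({y} : Finset V)
    simp at this; omega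

/-- A flag: an ordered triple of vertices whose vertex set is a face. -/
def Flag (T : PreTriangulation V) : Type u := {p : V × V × V // fsv p ∈ T.faces}

lemma flag_card (hT : T.IsTriangulation) (a : Flag T) : (fsv a.1).card = 3 :=
  hT.face_card _ a.2

lemma flag_ne12 (hT : T.IsTriangulation) (a : Flag T) : a.1.1 ≠ a.1.2.1 :=
  (distinct_of_card3 (flag_card hT a)).1

lemma flag_ne13 (hT : T.IsTriangulation) (a : Flag T) : a.1.1 ≠ a.1.2.2 :=
  (distinct_of_card3 (flag_card hT a)).2.1

lemma flag_ne23 (hT : T.IsTriangulation) (a : Flag T) : a.1.2.1 ≠ a.1.2.2 :=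
  (distinct_of_card3 (flag_card hT a)).2.2

lemma flag_ext {b c : Flag T} (h1 : b.1.1 = c.1.1) (h2 : b.1.2.1 = c.1.2.1)
    (h3 : b.1.2.2 = c.1.2.2) : b = c :=
  Subtype.ext (Prod.ext h1 (Prod.ext h2 h3))

/-- The zigzag step on flags. -/
def Step (a b : Flag T) : Prop :=
  b.1.1 = a.1.2.1 ∧ b.1.2.1 = a.1.2.2 ∧ fsv b.1 ≠ fsv a.1

/-- Reversal of flags. -/
def rr : Flag T → Flag T := fun a => ⟨(a.1.2.2, a.1.2.1, a.1.1), by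
  rw [fsv_comm]; exact a.2⟩

lemma rr_rr (a : Flag T) : rr (rr a) = a := rfl

lemma fsv_rr (a : Flag T) : fsv (rr a).1 = fsv a.1 := fsv_comm _

lemma step_rev {a b : Flag T} (h : Step a b) : Step (rr b) (rr a) := by
  obtain ⟨h1, h2, h3⟩ := h
  exact ⟨h2.symm, h1.symm, by rw [fsv_rr, fsv_rr]; exact h3.symm⟩

lemma other_face (hT : T.IsTriangulation) {y z : V} (hadj : T.graph.Adj y z)
    {F : Finset V} (hF : F ∈ T.faces) (hy : y ∈ F) (hz : z ∈ F) :
    ∃! G, (G ∈ T.faces ∧ y ∈ G ∧ z ∈ G) ∧ G ≠ F := by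
  obtain ⟨A, B, hAB, hset⟩ := Set.ncard_eq_two.mp (hT.edge_in_two_faces y z hadj)
  have hFm : F ∈ ({A, B} : Set (Finset V)) := by rw [← hset]; exact ⟨hF, hy, hz⟩
  have hA : A ∈ {H | H ∈ T.faces ∧ y ∈ H ∧ z ∈ H} := by rw [hset]; left; rfl
  have hB : B ∈ {H | H ∈ T.faces ∧ y ∈ H ∧ z ∈ H} := by rw [hset]; right; rfl
  rcases hFm with rfl | hFB
  · refine ⟨B, ⟨hB, hAB.symm⟩, ?_⟩
    rintro G ⟨hG, hGne⟩
    have : G ∈ ({F, B} : Set (Finset V)) := by rw [← hset]; exact hG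
    rcases this with rfl | h
    · exact absurd rfl hGne
    · exact h
  · have hFB' : F = B := hFB
    subst hFB'
    refine ⟨A, ⟨hA, hAB⟩, ?_⟩
    rintro G ⟨hG, hGne⟩
    have : G ∈ ({A, F} : Set (Finset V)) := by rw [← hset]; exact hG
    rcases this with h | h
    · exact h
    · exact absurd h hGne

lemma face_third (hT : T.IsTriangulation) {G : Finset V} (hG : G ∈ T.faces) {y z : V}
    (hy : y ∈ G) (hz : z ∈ G) (hyz : y ≠ z) :
    ∃ w, w ≠ y ∧ w ≠ z ∧ G = {y, z, w} := by
  have hsub : ({y, z} : Finset V) ⊆ G := by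
    intro v hv; rcases Finset.mem_insert.mp hv with rfl | hv
    · exact hy
    · rw [Finset.mem_singleton.mp hv]; exact hz
  have hcard := hT.face_card G hG
  have h1 : (G \ {y, z}).card = 1 := by
    rw [Finset.card_sdiff_of_subset hsub, Finset.card_pair hyz, hcard]
  obtain ⟨w, hw⟩ := Finset.card_eq_one.mp h1
  have hwmem : w ∈ G \ ({y, z} : Finset V) := by rw [hw]; exact Finset.mem_singleton_self w
  obtain ⟨hwG, hwyz⟩ := Finset.mem_sdiff.mp hwmem
  have hwy : w ≠ y := fun h => hwyz (by rw [h]; simp)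
  have hwz : w ≠ z := fun h => hwyz (by rw [h]; simp)
  refine ⟨w, hwy, hwz, ?_⟩
  have hsub2 : ({y, z, w} : Finset V) ⊆ G := by
    intro v hv
    rcases Finset.mem_insert.mp hv with rfl | hv
    · exact hy
    rcases Finset.mem_insert.mp hv with rfl | hv
    · exact hz
    · rw [Finset.mem_singleton.mp hv]; exact hwG
  have : ({y, z, w} : Finset V).card = 3 :=
    card3_of_distinct hyz hwy.symm hwz.symm
  exact (Finset.eq_of_subset_of_card_le hsub2 (by omega)).symm

lemma step_exu (hT : T.IsTriangulation) (a : Flag T) : ∃! b : Flag T, Step a b := by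
  obtain ⟨⟨x, y, z⟩, ha⟩ := a
  have hxy : x ≠ y := flag_ne12 hT ⟨(x, y, z), ha⟩
  have hyz : y ≠ z := flag_ne23 hT ⟨(x, y, z), ha⟩
  have hyF : y ∈ fsv ((x, y, z) : V × V × V) := by simp [fsv]
  have hzF : z ∈ fsv ((x, y, z) : V × V × V) := by simp [fsv]
  have hadj : T.graph.Adj y z := hT.face_adj _ ha y hyF z hzF hyz
  obtain ⟨G, ⟨⟨hGf, hyG, hzG⟩, hGne⟩, hGuniq⟩ := other_face hT hadj ha hyF hzF
  obtain ⟨w, hwy, hwz, hGeq⟩ := face_third hT hGf hyG hzG hyz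
  have hbface : fsv ((y, z, w) : V × V × V) ∈ T.faces := by
    show ({y, z, w} : Finset V) ∈ T.faces
    rw [← hGeq]; exact hGf
  refine ⟨⟨(y, z, w), hbface⟩, ⟨rfl, rfl, ?_⟩, ?_⟩
  · show ({y, z, w} : Finset V) ≠ fsv ((x, y, z) : V × V × V)
    rw [← hGeq]; exact hGne
  · intro b hb
    obtain ⟨h1, h2, h3⟩ := hb
    have h1 : b.1.1 = y := h1
    have h2 : b.1.2.1 = z := h2
    have hb' : fsv b.1 = G := by
      apply hGuniq
      refine ⟨⟨b.2, ?_, ?_⟩, h3⟩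
      · rw [← h1]; simp [fsv]
      · rw [← h2]; simp [fsv]
    have hz'G : b.1.2.2 ∈ G := by rw [← hb']; simp [fsv]
    have hz'y : b.1.2.2 ≠ y := by rw [← h1]; exact (flag_ne13 hT b).symm
    have hz'z : b.1.2.2 ≠ z := by rw [← h2]; exact (flag_ne23 hT b).symm
    have hzw : b.1.2.2 = w := by
      rw [hGeq] at hz'G
      rcases Finset.mem_insert.mp hz'G with h | h
      · exact absurd h hz'y
      rcases Finset.mem_insert.mp h with h | h
      · exact absurd h hz'z
      · exact Finset.mem_singleton.mp h
    exact (flag_ext h1 h2 hzw).symm.symm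


noncomputable def nxt (hT : T.IsTriangulation) : Flag T → Flag T :=
  fun a => (step_exu hT a).choose

lemma step_nxt (hT : T.IsTriangulation) (a : Flag T) : Step a (nxt hT a) :=
  (step_exu hT a).choose_spec.1

lemma nxt_uniq (hT : T.IsTriangulation) {a b : Flag T} (h : Step a b) : b = nxt hT a :=
  (step_exu hT a).choose_spec.2 b h

lemma step_left_uniq (hT : T.IsTriangulation) {a b c : Flag T}
    (h1 : Step a c) (h2 : Step b c) : a = b := by
  have e1 := nxt_uniq hT (step_rev h1)
  have e2 := nxt_uniq hT (step_rev h2)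
  have h3 : rr a = rr b := by rw [e1, ← e2]
  calc a = rr (rr a) := (rr_rr a).symm
    _ = rr (rr b) := by rw [h3]
    _ = b := rr_rr b

noncomputable def sig (hT : T.IsTriangulation) : Equiv.Perm (Flag T) where
  toFun := nxt hT
  invFun := fun b => rr (nxt hT (rr b))
  left_inv := by
    intro a
    have h1 : Step (rr (nxt hT (rr (nxt hT a)))) (nxt hT a) := by
      have := step_rev (step_nxt hT (rr (nxt hT a)))
      rwa [rr_rr] at this
    exact step_left_uniq hT h1 (step_nxt hT a)
  right_inv := by
    intro b
    have h1 : Step (rr (nxt hT (rr b))) b := by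
      have := step_rev (step_nxt hT (rr b))
      rwa [rr_rr] at this
    exact (nxt_uniq hT h1).symm

lemma sig_step (hT : T.IsTriangulation) (a : Flag T) : Step a (sig hT a) := step_nxt hT a

lemma sig_fst (hT : T.IsTriangulation) (a : Flag T) : (sig hT a).1.1 = a.1.2.1 :=
  (sig_step hT a).1

lemma sig_snd (hT : T.IsTriangulation) (a : Flag T) : (sig hT a).1.2.1 = a.1.2.2 :=
  (sig_step hT a).2.1

lemma sig_fsv_ne (hT : T.IsTriangulation) (a : Flag T) : fsv (sig hT a).1 ≠ fsv a.1 :=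
  (sig_step hT a).2.2

lemma sig_uniq (hT : T.IsTriangulation) {a b : Flag T} (h : Step a b) : b = sig hT a :=
  nxt_uniq hT h

def rho : Equiv.Perm (Flag T) := ⟨rr, rr, rr_rr, rr_rr⟩

lemma rho_apply (a : Flag T) : (rho : Equiv.Perm (Flag T)) a = rr a := rfl

lemma rho_inv : (rho : Equiv.Perm (Flag T))⁻¹ = rho := rfl

lemma conj_sig (hT : T.IsTriangulation) : rho * sig hT * rho = (sig hT)⁻¹ := by
  apply Equiv.ext
  intro a
  rfl

lemma sig_zpow_neg (hT : T.IsTriangulation) (t : ℤ) :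
    (sig hT) ^ (-t) = rho * (sig hT) ^ t * rho := by
  have h : (sig hT)⁻¹ = rho * sig hT * rho⁻¹ := by rw [rho_inv, conj_sig]
  rw [zpow_neg, ← inv_zpow, h, conj_zpow, rho_inv]

lemma sig_zpow_rr (hT : T.IsTriangulation) (t : ℤ) (a : Flag T) :
    ((sig hT) ^ t) (rr a) = rr (((sig hT) ^ (-t)) a) := by
  rw [sig_zpow_neg]
  show ((sig hT) ^ t) (rr a) = rr (rr (((sig hT) ^ t) (rr a)))
  rw [rr_rr]

lemma zpow_succ_apply (hT : T.IsTriangulation) (t : ℤ) (a : Flag T) :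
    ((sig hT) ^ (t + 1)) a = sig hT (((sig hT) ^ t) a) := by
  rw [add_comm, zpow_add, zpow_one, Equiv.Perm.mul_apply]

/-- The vertex sequence generated by a flag. -/
noncomputable def sA (hT : T.IsTriangulation) (a : Flag T) : ℤ → V :=
  fun t => (((sig hT) ^ t) a).1.1

lemma sA_succ (hT : T.IsTriangulation) (a : Flag T) (t : ℤ) :
    sA hT a (t + 1) = (((sig hT) ^ t) a).1.2.1 := by
  show (((sig hT) ^ (t+1)) a).1.1 = _
  rw [zpow_succ_apply, sig_fst]

lemma sA_succ2 (hT : T.IsTriangulation) (a : Flag T) (t : ℤ) :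
    sA hT a (t + 2) = (((sig hT) ^ t) a).1.2.2 := by
  have h : t + 2 = (t + 1) + 1 := by ring
  rw [h, sA_succ, zpow_succ_apply, sig_snd]

lemma fsv_flag (hT : T.IsTriangulation) (a : Flag T) (t : ℤ) :
    fsv (((sig hT) ^ t) a).1 = {sA hT a t, sA hT a (t + 1), sA hT a (t + 2)} := by
  rw [sA_succ, sA_succ2]
  rfl

lemma sA_zero (hT : T.IsTriangulation) (a : Flag T) : sA hT a 0 = a.1.1 := by
  show (((sig hT) ^ (0:ℤ)) a).1.1 = _
  rw [zpow_zero]; rfl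

lemma sA_one (hT : T.IsTriangulation) (a : Flag T) : sA hT a 1 = a.1.2.1 := by
  have := sA_succ hT a 0
  rwa [zero_add, zpow_zero] at this

lemma sA_two (hT : T.IsTriangulation) (a : Flag T) : sA hT a 2 = a.1.2.2 := by
  have := sA_succ2 hT a 0
  rwa [zero_add, zpow_zero] at this


lemma flag_finite (hT : T.IsTriangulation) : Finite (Flag T) := by
  have := hT.finiteVerts
  show Finite {p : V × V × V // fsv p ∈ T.faces}
  infer_instance

lemma exists_period (hT : T.IsTriangulation) (a : Flag T) :
    ∃ k : ℕ, 0 < k ∧ ((sig hT) ^ (k : ℤ)) a = a := by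
  have := flag_finite hT
  obtain ⟨k, l, hkl, heq⟩ :=
    Finite.exists_ne_map_eq_of_infinite (fun k : ℕ => ((sig hT) ^ (k : ℤ)) a)
  have key : ∀ k l : ℕ, k < l → ((sig hT) ^ (k : ℤ)) a = ((sig hT) ^ (l : ℤ)) a →
      ∃ m : ℕ, 0 < m ∧ ((sig hT) ^ (m : ℤ)) a = a := by
    intro k l hlt he
    refine ⟨l - k, by omega, ?_⟩
    have hc : ((l - k : ℕ) : ℤ) = -(k : ℤ) + l := by omega
    rw [hc, zpow_add, Equiv.Perm.mul_apply, ← he, ← Equiv.Perm.mul_apply, ← zpow_add]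
    norm_num
  rcases hkl.lt_or_gt with h | h
  · exact key k l h heq
  · exact key l k h heq.symm

lemma sA_flag_eq (hT : T.IsTriangulation) (a : Flag T) {m : ℤ}
    (h0 : sA hT a m = sA hT a 0) (h1 : sA hT a (m + 1) = sA hT a 1)
    (h2 : sA hT a (m + 2) = sA hT a 2) : ((sig hT) ^ m) a = a := by
  apply flag_ext
  · rw [← sA_zero hT a, ← h0]; rfl
  · rw [← sA_one hT a, ← h1, sA_succ]
  · rw [← sA_two hT a, ← h2, sA_succ2]

lemma no_small_period (hT : T.IsTriangulation) (a : Flag T) (k : ℕ)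
    (h1 : 0 < k) (h2 : k ≤ 3) : ((sig hT) ^ (k : ℤ)) a ≠ a := by
  interval_cases k
  · intro h
    have h' : sig hT a = a := by rwa [show ((1:ℕ):ℤ) = 1 by norm_num, zpow_one] at h
    exact flag_ne12 hT a (by
      calc a.1.1 = (sig hT a).1.1 := by rw [h']
        _ = a.1.2.1 := sig_fst hT a)
  · intro h
    have h' : ((sig hT) ^ (2:ℤ)) a = a := by rwa [show ((2:ℕ):ℤ) = 2 by norm_num] at h
    have e : sA hT a 2 = a.1.1 := by
      show (((sig hT) ^ (2:ℤ)) a).1.1 = _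
      rw [h']
    exact flag_ne13 hT a (e.symm.trans (sA_two hT a))
  · intro h
    have h' : ((sig hT) ^ (3:ℤ)) a = a := by rwa [show ((3:ℕ):ℤ) = 3 by norm_num] at h
    have h3 : sA hT a 3 = sA hT a 0 := by
      show (((sig hT) ^ (3:ℤ)) a).1.1 = _
      rw [h', sA_zero]
    have e1 : fsv (((sig hT) ^ (1:ℤ)) a).1 = {sA hT a 1, sA hT a 2, sA hT a 3} := by
      rw [fsv_flag]; norm_num
    have e0 : fsv (((sig hT) ^ (0:ℤ)) a).1 = {sA hT a 0, sA hT a 1, sA hT a 2} := by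
      rw [fsv_flag]; norm_num
    apply sig_fsv_ne hT a
    calc fsv (sig hT a).1 = fsv (((sig hT) ^ (1:ℤ)) a).1 := by rw [zpow_one]
      _ = {sA hT a 1, sA hT a 2, sA hT a 3} := e1
      _ = {sA hT a 0, sA hT a 1, sA hT a 2} := by rw [h3]; ext v; simp; tauto
      _ = fsv (((sig hT) ^ (0:ℤ)) a).1 := e0.symm
      _ = fsv a.1 := by rw [zpow_zero]; rfl

noncomputable def perA (hT : T.IsTriangulation) (a : Flag T) : ℕ :=
  @Nat.find _ (Classical.decPred _) (exists_period hT a)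

lemma perA_spec (hT : T.IsTriangulation) (a : Flag T) :
    0 < perA hT a ∧ ((sig hT) ^ ((perA hT a : ℕ) : ℤ)) a = a :=
  @Nat.find_spec _ (Classical.decPred _) (exists_period hT a)

lemma perA_min (hT : T.IsTriangulation) (a : Flag T) {m : ℕ}
    (h : 0 < m ∧ ((sig hT) ^ ((m : ℕ) : ℤ)) a = a) : perA hT a ≤ m :=
  @Nat.find_le _ _ (Classical.decPred _) _ h

/-- The zigzag generated by a flag. -/
noncomputable def flagZig (hT : T.IsTriangulation) (a : Flag T) : T.Zigzag where
  n := perA hT a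
  seq := sA hT a
  face := fun i => fsv (((sig hT) ^ i) a).1
  three_lt_n := by
    by_contra hle
    push_neg at hle
    obtain ⟨hpos, hfix⟩ := perA_spec hT a
    exact no_small_period hT a _ hpos hle hfix
  periodic := by
    intro i
    obtain ⟨hpos, hfix⟩ := perA_spec hT a
    show ((((sig hT) ^ (i + ((perA hT a : ℕ) : ℤ)))) a).1.1 = _
    rw [zpow_add, Equiv.Perm.mul_apply, hfix]
    rfl
  n_minimal := by
    intro m hm hper
    apply perA_min hT a
    refine ⟨hm, ?_⟩
    apply sA_flag_eq hT a
    · have := hper 0; rwa [zero_add] at this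
    · have := hper 1; rwa [show (1:ℤ) + m = m + 1 by ring] at this
    · have := hper 2; rwa [show (2:ℤ) + m = m + 2 by ring] at this
  seq_ne := by
    intro i
    rw [sA_succ]
    exact flag_ne12 hT _
  seq_adj := by
    intro i
    have h := hT.face_adj _ (((sig hT) ^ i) a).2 _
      (show (((sig hT) ^ i) a).1.1 ∈ fsv (((sig hT) ^ i) a).1 by simp [fsv]) _
      (show (((sig hT) ^ i) a).1.2.1 ∈ fsv (((sig hT) ^ i) a).1 by simp [fsv])
      (flag_ne12 hT _)
    rw [sA_succ]
    exact h
  face_mem := fun i => (((sig hT) ^ i) a).2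
  subset_face := by
    intro i
    show _ ⊆ fsv (((sig hT) ^ i) a).1
    rw [fsv_flag]
  face_unique := by
    intro i G hG hsub
    have hcard : ({sA hT a i, sA hT a (i+1), sA hT a (i+2)} : Finset V).card = 3 := by
      apply card3_of_distinct
      · rw [sA_succ]; exact flag_ne12 hT _
      · rw [sA_succ2]; exact flag_ne13 hT _
      · rw [sA_succ, sA_succ2]; exact flag_ne23 hT _
    have hGc := hT.face_card G hG
    have := Finset.eq_of_subset_of_card_le hsub (by omega)
    show G = fsv (((sig hT) ^ i) a).1
    rw [← this, fsv_flag]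
  face_ne := by
    intro i
    have h := sig_fsv_ne hT (((sig hT) ^ i) a)
    rw [← zpow_succ_apply] at h
    exact h.symm

lemma flagZig_seq (hT : T.IsTriangulation) (a : Flag T) : (flagZig hT a).seq = sA hT a := rfl


variable {Z : T.Zigzag}

lemma seq_ne2 (hT : T.IsTriangulation) (Z : T.Zigzag) (i : ℤ) : Z.seq i ≠ Z.seq (i + 2) := by
  intro h
  have hadj := Z.seq_adj i
  obtain ⟨A, B, hAB, hset⟩ := Set.ncard_eq_two.mp (hT.edge_in_two_faces _ _ hadj)
  have htrip : ({Z.seq i, Z.seq (i+1), Z.seq (i+2)} : Finset V) = {Z.seq i, Z.seq (i+1)} := by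
    rw [← h]; ext v; simp; try tauto
  have hA : A ∈ {H | H ∈ T.faces ∧ Z.seq i ∈ H ∧ Z.seq (i+1) ∈ H} := by rw [hset]; left; rfl
  have hB : B ∈ {H | H ∈ T.faces ∧ Z.seq i ∈ H ∧ Z.seq (i+1) ∈ H} := by rw [hset]; right; rfl
  have hsubA : ({Z.seq i, Z.seq (i+1), Z.seq (i+2)} : Finset V) ⊆ A := by
    rw [htrip]
    intro v hv
    rcases Finset.mem_insert.mp hv with rfl | hv
    · exact hA.2.1
    · rw [Finset.mem_singleton.mp hv]; exact hA.2.2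
  have hsubB : ({Z.seq i, Z.seq (i+1), Z.seq (i+2)} : Finset V) ⊆ B := by
    rw [htrip]
    intro v hv
    rcases Finset.mem_insert.mp hv with rfl | hv
    · exact hB.2.1
    · rw [Finset.mem_singleton.mp hv]; exact hB.2.2
  have e1 := Z.face_unique i A hA.1 hsubA
  have e2 := Z.face_unique i B hB.1 hsubB
  exact hAB (e1.trans e2.symm)

lemma face_eq_triple (hT : T.IsTriangulation) (Z : T.Zigzag) (i : ℤ) :
    Z.face i = {Z.seq i, Z.seq (i+1), Z.seq (i+2)} := by
  have hsub := Z.subset_face i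
  have hc1 : ({Z.seq i, Z.seq (i+1), Z.seq (i+2)} : Finset V).card = 3 := by
    apply card3_of_distinct (Z.seq_ne i) (seq_ne2 hT Z i)
    have := Z.seq_ne (i + 1)
    rwa [show i + 1 + 1 = i + 2 by ring] at this
  have hc2 := hT.face_card _ (Z.face_mem i)
  exact (Finset.eq_of_subset_of_card_le hsub (by omega)).symm

/-- The flag sequence of a zigzag. -/
def zf (hT : T.IsTriangulation) (Z : T.Zigzag) : ℤ → Flag T := fun i =>
  ⟨(Z.seq i, Z.seq (i+1), Z.seq (i+2)), by
    show ({Z.seq i, Z.seq (i+1), Z.seq (i+2)} : Finset V) ∈ T.faces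
    rw [← face_eq_triple hT Z i]
    exact Z.face_mem i⟩

lemma zf_fsv (hT : T.IsTriangulation) (Z : T.Zigzag) (i : ℤ) :
    fsv (zf hT Z i).1 = Z.face i := (face_eq_triple hT Z i).symm

lemma zf_succ (hT : T.IsTriangulation) (Z : T.Zigzag) (i : ℤ) :
    zf hT Z (i + 1) = sig hT (zf hT Z i) := by
  apply sig_uniq hT
  refine ⟨rfl, ?_, ?_⟩
  · show Z.seq (i + 1 + 1) = Z.seq (i + 2)
    congr 1; ring
  · rw [zf_fsv, zf_fsv]
    exact (Z.face_ne i).symm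

lemma zf_zpow (hT : T.IsTriangulation) (Z : T.Zigzag) (i t : ℤ) :
    zf hT Z (i + t) = ((sig hT) ^ t) (zf hT Z i) := by
  induction t using Int.induction_on with
  | zero => rw [add_zero, zpow_zero]; rfl
  | succ k ih =>
    have : i + ((k : ℤ) + 1) = (i + k) + 1 := by ring
    rw [this, zf_succ, ih, ← zpow_succ_apply]
  | pred k ih =>
    apply (sig hT).injective
    have h1 : sig hT (zf hT Z (i + (-(k:ℤ) - 1))) = zf hT Z (i + -(k:ℤ)) := by
      rw [← zf_succ]
      congr 1; ring
    rw [h1, ih, ← zpow_succ_apply]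
    congr 1; ring

lemma zf_shift (hT : T.IsTriangulation) (Z : T.Zigzag) {i j : ℤ}
    (h : zf hT Z i = zf hT Z j) (t : ℤ) : Z.seq (t + (j - i)) = Z.seq t := by
  have h1 : zf hT Z (i + (t - i)) = zf hT Z (j + (t - i)) := by
    rw [zf_zpow, zf_zpow, h]
  have h2 : Z.seq (i + (t - i)) = Z.seq (j + (t - i)) := congrArg (fun b : Flag T => b.1.1) h1
  calc Z.seq (t + (j - i)) = Z.seq (j + (t - i)) := by congr 1; ring
    _ = Z.seq (i + (t - i)) := h2.symm
    _ = Z.seq t := by congr 1; ring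

lemma period_bound (Z : T.Zigzag) {d : ℤ} (h : ∀ t : ℤ, Z.seq (t + d) = Z.seq t)
    (hd : d ≠ 0) : (Z.n : ℤ) ≤ |d| := by
  have hm : 0 < d.natAbs := Int.natAbs_pos.mpr hd
  have hper : ∀ t : ℤ, Z.seq (t + (d.natAbs : ℤ)) = Z.seq t := by
    intro t
    rcases le_or_gt 0 d with hd0 | hd0
    · rw [Int.natAbs_of_nonneg hd0]; exact h t
    · have habs : (d.natAbs : ℤ) = -d := by omega
      rw [habs]
      have := h (t + -d)
      rw [show t + -d + d = t by ring] at this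
      exact this.symm
  have := Z.n_minimal d.natAbs hm hper
  have habs : |d| = (d.natAbs : ℤ) := Int.abs_eq_natAbs d
  omega

lemma zf_period_mul (hT : T.IsTriangulation) (Z : T.Zigzag) (t : ℤ) (k : ℤ) :
    zf hT Z (t + (Z.n : ℤ) * k) = zf hT Z t := by
  have hper : ∀ s : ℤ, zf hT Z (s + (Z.n : ℤ)) = zf hT Z s := by
    intro s
    apply flag_ext
    · exact Z.periodic s
    · show Z.seq (s + Z.n + 1) = Z.seq (s + 1)
      have := Z.periodic (s + 1)
      rwa [show s + 1 + (Z.n : ℤ) = s + Z.n + 1 by ring] at this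
    · show Z.seq (s + Z.n + 2) = Z.seq (s + 2)
      have := Z.periodic (s + 2)
      rwa [show s + 2 + (Z.n : ℤ) = s + Z.n + 2 by ring] at this
  induction k using Int.induction_on with
  | zero => rw [mul_zero, add_zero]
  | succ k ih =>
    have : t + (Z.n : ℤ) * ((k : ℤ) + 1) = (t + (Z.n : ℤ) * k) + Z.n := by ring
    rw [this, hper, ih]
  | pred k ih =>
    have h1 := hper (t + (Z.n : ℤ) * (-(k:ℤ) - 1))
    rw [show t + (Z.n : ℤ) * (-(k:ℤ) - 1) + Z.n = t + (Z.n : ℤ) * (-(k:ℤ)) by ring] at h1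
    rw [← h1]
    exact ih

lemma not_self_rev (hT : T.IsTriangulation) (Z : T.Zigzag) (i j : ℤ) :
    zf hT Z i ≠ rr (zf hT Z j) := by
  intro h
  have hkey : ∀ t : ℤ, Z.seq (i + t) = Z.seq (j - t + 2) := by
    intro t
    have h1 : zf hT Z (i + t) = rr (((sig hT) ^ (-t)) (zf hT Z j)) := by
      rw [zf_zpow, h, sig_zpow_rr]
    have h2 : ((sig hT) ^ (-t)) (zf hT Z j) = zf hT Z (j - t) := by
      rw [← zf_zpow]
      congr 1 <;> ring
    rw [h2] at h1
    exact congrArg (fun b : Flag T => b.1.1) h1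
  have hc : ∀ s : ℤ, Z.seq s = Z.seq ((i + j + 2) - s) := by
    intro s
    have := hkey (s - i)
    rw [show i + (s - i) = s by ring, show j - (s - i) + 2 = (i + j + 2) - s by ring] at this
    exact this
  rcases Int.even_or_odd (i + j + 2) with ⟨k, hk⟩ | ⟨k, hk⟩
  · have := hc (k - 1)
    rw [show i + j + 2 - (k - 1) = (k - 1) + 2 by omega] at this
    exact seq_ne2 hT Z (k - 1) this
  · have := hc k
    rw [show i + j + 2 - k = k + 1 by omega] at this
    exact Z.seq_ne k this

lemma flag_covered (hT : T.IsTriangulation) (hz : T.ZKnotted) (Z : T.Zigzag) (a : Flag T) :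
    (∃ i, zf hT Z i = a) ∨ (∃ i, rr (zf hT Z i) = a) := by
  rcases hz.2 Z (flagZig hT a) with ⟨k, hk⟩ | ⟨k, hk⟩
  · left
    refine ⟨k, ?_⟩
    apply flag_ext
    · show Z.seq k = a.1.1
      have := hk 0
      rw [flagZig_seq, sA_zero, zero_add] at this
      exact this.symm
    · show Z.seq (k + 1) = a.1.2.1
      have := hk 1
      rw [flagZig_seq, sA_one, show (1:ℤ) + k = k + 1 by ring] at this
      exact this.symm
    · show Z.seq (k + 2) = a.1.2.2
      have := hk 2
      rw [flagZig_seq, sA_two, show (2:ℤ) + k = k + 2 by ring] at this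
      exact this.symm
  · right
    refine ⟨k - 2, ?_⟩
    apply flag_ext
    · show Z.seq (k - 2 + 2) = a.1.1
      have := hk 0
      rw [flagZig_seq, sA_zero, show k - (0:ℤ) = k - 2 + 2 by ring] at this
      exact this.symm
    · show Z.seq (k - 2 + 1) = a.1.2.1
      have := hk 1
      rw [flagZig_seq, sA_one, show k - (1:ℤ) = k - 2 + 1 by ring] at this
      exact this.symm
    · show Z.seq (k - 2) = a.1.2.2
      have := hk 2
      rw [flagZig_seq, sA_two] at this
      exact this.symm


lemma fsv_mem_explicit {x y z : V} (hxy : x ≠ y) (hxz : x ≠ z) (hyz : y ≠ z)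
    (p : V × V × V) (hp : fsv p = {x, y, z}) :
    p ∈ ({(x,y,z),(y,z,x),(z,x,y),(z,y,x),(y,x,z),(x,z,y)} : Finset (V×V×V)) := by
  obtain ⟨a, b, c⟩ := p
  have hcard : ({a, b, c} : Finset V).card = 3 := by
    rw [show ({a, b, c} : Finset V) = fsv (a, b, c) from rfl, hp]
    exact card3_of_distinct hxy hxz hyz
  obtain ⟨hab, hac, hbc⟩ := distinct_of_card3 hcard
  have ha : a = x ∨ a = y ∨ a = z := by
    have : a ∈ ({x, y, z} : Finset V) := by rw [← hp]; simp [fsv]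
    simpa using this
  have hb : b = x ∨ b = y ∨ b = z := by
    have : b ∈ ({x, y, z} : Finset V) := by rw [← hp]; simp [fsv]
    simpa using this
  have hc : c = x ∨ c = y ∨ c = z := by
    have : c ∈ ({x, y, z} : Finset V) := by rw [← hp]; simp [fsv]
    simpa using this
  rcases ha with rfl | rfl | rfl <;> rcases hb with rfl | rfl | rfl <;>
    rcases hc with rfl | rfl | rfl <;> simp_all

lemma fsv_of_explicit {x y z : V} (p : V × V × V)
    (hp : p ∈ ({(x,y,z),(y,z,x),(z,x,y),(z,y,x),(y,x,z),(x,z,y)} : Finset (V×V×V))) :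
    fsv p = {x, y, z} := by
  simp only [Finset.mem_insert, Finset.mem_singleton] at hp
  rcases hp with rfl | rfl | rfl | rfl | rfl | rfl <;> (ext v; simp [fsv]; try tauto)

lemma explicit_card {x y z : V} (hxy : x ≠ y) (hxz : x ≠ z) (hyz : y ≠ z) :
    ({(x,y,z),(y,z,x),(z,x,y),(z,y,x),(y,x,z),(x,z,y)} : Finset (V×V×V)).card = 6 := by
  have h1 : y ≠ x := hxy.symm
  have h2 : z ≠ x := hxz.symm
  have h3 : z ≠ y := hyz.symm
  rw [Finset.card_insert_of_notMem (by simp [Prod.ext_iff, hxy, hxz, hyz, h1, h2, h3]),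
      Finset.card_insert_of_notMem (by simp [Prod.ext_iff, hxy, hxz, hyz, h1, h2, h3]),
      Finset.card_insert_of_notMem (by simp [Prod.ext_iff, hxy, hxz, hyz, h1, h2, h3]),
      Finset.card_insert_of_notMem (by simp [Prod.ext_iff, hxy, hxz, hyz, h1, h2, h3]),
      Finset.card_insert_of_notMem (by simp [Prod.ext_iff, hxy, hxz, hyz, h1, h2, h3]),
      Finset.card_singleton]

lemma A_card (hT : T.IsTriangulation) {F : Finset V} (hF : F ∈ T.faces) :
    ({a : Flag T | fsv a.1 = F}).ncard = 6 := by
  obtain ⟨x, y, z, hxy, hxz, hyz, hFeq⟩ := Finset.card_eq_three.mp (hT.face_card F hF)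
  subst hFeq
  have hequiv : {a : Flag T | fsv a.1 = {x, y, z}} ≃
      (↑({(x,y,z),(y,z,x),(z,x,y),(z,y,x),(y,x,z),(x,z,y)} : Finset (V×V×V)) : Set (V×V×V)) :=
    { toFun := fun a => ⟨a.1.1, Finset.mem_coe.mpr (fsv_mem_explicit hxy hxz hyz a.1.1 a.2)⟩
      invFun := fun p => ⟨⟨p.1, by
        rw [show fsv p.1 = {x, y, z} from fsv_of_explicit p.1 (Finset.mem_coe.mp p.2)]
        exact hF⟩, fsv_of_explicit p.1 (Finset.mem_coe.mp p.2)⟩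
      left_inv := fun a => Subtype.ext (Subtype.ext rfl)
      right_inv := fun p => Subtype.ext rfl }
  rw [← Nat.card_coe_set_eq, Nat.card_congr hequiv, Nat.card_coe_set_eq,
    Set.ncard_coe_finset]
  exact explicit_card hxy hxz hyz

end ZKAux

open ZKAux

theorem statement_3 {V : Type u} [DecidableEq V] (T : PreTriangulation V)
    (hT : T.IsTriangulation) (hz : T.ZKnotted) (Z : T.Zigzag)
    (F : Finset V) (hF : F ∈ T.faces) :
    Z.faceCount F = 3 := by
  classical
  have hfin := flag_finite hT
  have hn : 3 < Z.n := Z.three_lt_n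
  set O : Set (Flag T) := Set.range (zf hT Z) with hO
  set A : Set (Flag T) := {a : Flag T | fsv a.1 = F} with hA
  -- Step 1: the face count equals the cardinality of O ∩ A
  have h1 : Z.faceCount F = (O ∩ A).ncard := by
    rw [← Nat.card_coe_set_eq]
    show Nat.card {i : Fin Z.n //
      ({Z.seq ((i : ℕ) : ℤ), Z.seq (((i : ℕ) : ℤ) + 1), Z.seq (((i : ℕ) : ℤ) + 2)} : Finset V)
        = F} = _
    apply Nat.card_eq_of_bijective
      (fun i => (⟨zf hT Z ((i.1 : ℕ) : ℤ), ⟨((i.1 : ℕ) : ℤ), rfl⟩, i.2⟩ : ↥(O ∩ A)))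
    constructor
    · intro i j hij
      have hzf : zf hT Z ((i.1 : ℕ) : ℤ) = zf hT Z ((j.1 : ℕ) : ℤ) :=
        congrArg Subtype.val hij
      have hsh := zf_shift hT Z hzf
      by_cases hne : ((j.1 : ℕ) : ℤ) - ((i.1 : ℕ) : ℤ) = 0
      · have : (i.1 : ℕ) = (j.1 : ℕ) := by omega
        exact Subtype.ext (Fin.ext this)
      · have hb := period_bound Z hsh hne
        have hi := i.1.2
        have hj := j.1.2
        have : |((j.1 : ℕ) : ℤ) - ((i.1 : ℕ) : ℤ)| < Z.n := by
          rw [abs_sub_lt_iff]; omega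
        omega
    · rintro ⟨b, ⟨t, ht⟩, hbA⟩
      have hn0 : (0 : ℤ) < (Z.n : ℤ) := by exact_mod_cast (by omega : 0 < Z.n)
      set q : ℤ := t % (Z.n : ℤ) with hq
      have hq0 : 0 ≤ q := Int.emod_nonneg t (by omega)
      have hqn : q < (Z.n : ℤ) := Int.emod_lt_of_pos t hn0
      have hzfq : zf hT Z q = b := by
        have := zf_period_mul hT Z q (t / (Z.n : ℤ))
        rw [show q + (Z.n : ℤ) * (t / (Z.n : ℤ)) = t from Int.emod_add_mul_ediv t (Z.n : ℤ)] at this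
        rw [← this]
        exact ht
      have hqlt : q.toNat < Z.n := by omega
      refine ⟨⟨⟨q.toNat, hqlt⟩, ?_⟩, ?_⟩
      · show ({Z.seq ((q.toNat : ℕ) : ℤ), _, _} : Finset V) = F
        rw [show ((q.toNat : ℕ) : ℤ) = q from Int.toNat_of_nonneg hq0]
        show fsv (zf hT Z q).1 = F
        rw [hzfq]
        exact hbA
      · apply Subtype.ext
        show zf hT Z ((q.toNat : ℕ) : ℤ) = b
        rw [show ((q.toNat : ℕ) : ℤ) = q from Int.toNat_of_nonneg hq0]
        exact hzfq
  -- Step 2: symmetry pairing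
  have hinj : Function.Injective (rr : Flag T → Flag T) :=
    Function.LeftInverse.injective rr_rr
  have hrrA : rr '' A = A := by
    apply Set.Subset.antisymm
    · rintro _ ⟨a, ha, rfl⟩
      show fsv (rr a).1 = F
      rw [fsv_rr]
      exact ha
    · intro a ha
      exact ⟨rr a, (by show fsv (rr a).1 = F; rw [fsv_rr]; exact ha), rr_rr a⟩
  have himg : rr '' (O ∩ A) = (rr '' O) ∩ A := by
    rw [Set.image_inter hinj, hrrA]
  have h4 : ((rr '' O) ∩ A).ncard = (O ∩ A).ncard := by
    rw [← himg, Set.ncard_image_of_injective _ hinj]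
  -- Step 3: A is partitioned
  have h2 : A = (O ∩ A) ∪ ((rr '' O) ∩ A) := by
    apply Set.Subset.antisymm
    · intro a ha
      rcases flag_covered hT hz Z a with ⟨i, hi⟩ | ⟨i, hi⟩
      · exact Or.inl ⟨⟨i, hi⟩, ha⟩
      · exact Or.inr ⟨⟨zf hT Z i, ⟨i, rfl⟩, hi⟩, ha⟩
    · rintro a (⟨_, ha⟩ | ⟨_, ha⟩) <;> exact ha
  have h3 : Disjoint (O ∩ A) ((rr '' O) ∩ A) := by
    rw [Set.disjoint_left]
    rintro a ⟨⟨t, ht⟩, _⟩ ⟨⟨b, ⟨s, hs⟩, hb⟩, _⟩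
    apply not_self_rev hT Z t s
    rw [ht, ← hb, ← hs]
  have h5 : A.ncard = 6 := A_card hT hF
  have h6 := Set.ncard_union_eq h3 (Set.toFinite _) (Set.toFinite _)
  rw [← h2, h5, h4] at h6
  omega
end

section
/- Let Γ and Γ' be z-knotted combinatorial triangulations and let F and F' be (2,2,2)-faces of second type in Γ and Γ' respectively. Then for every bijection g from the vertices of F to the vertices of F', the connected sum Γ#_gΓ' is not z-knotted. -/
universe u v

namespace PreTriangulation

variable {V : Type u} [DecidableEq V] {T : PreTriangulation V}

/-- The two faces on an edge. -/
lemma two_faces (hT : T.IsTriangulation) {u v : V} (h : T.graph.Adj u v) :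
    ∃ A B : Finset V, (A ∈ T.faces ∧ u ∈ A ∧ v ∈ A) ∧ (B ∈ T.faces ∧ u ∈ B ∧ v ∈ B) ∧ A ≠ B ∧
      ∀ C ∈ T.faces, u ∈ C → v ∈ C → C = A ∨ C = B := by
  have h2 := hT.edge_in_two_faces u v h
  obtain ⟨A, B, hne, hs⟩ := Set.ncard_eq_two.mp h2
  have hA : A ∈ {F | F ∈ T.faces ∧ u ∈ F ∧ v ∈ F} := by rw [hs]; exact Set.mem_insert _ _
  have hB : B ∈ {F | F ∈ T.faces ∧ u ∈ F ∧ v ∈ F} := by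
    rw [hs]; exact Set.mem_insert_iff.mpr (Or.inr rfl)
  refine ⟨A, B, hA, hB, hne, fun C hC hu hv => ?_⟩
  have : C ∈ {F | F ∈ T.faces ∧ u ∈ F ∧ v ∈ F} := ⟨hC, hu, hv⟩
  rw [hs] at this
  exact this

/-- the third element of a triple is determined -/
lemma third_eq {a b c c' : V} (h : ({a, b, c} : Finset V) = {a, b, c'})
    (hca : c' ≠ a) (hcb : c' ≠ b) : c' = c := by
  have hm : c' ∈ ({a, b, c} : Finset V) := by
    rw [h]; simp
  simp only [Finset.mem_insert, Finset.mem_singleton] at hm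
  tauto

namespace Zigzag

variable (Z : T.Zigzag)

lemma seq_ne_two (hT : T.IsTriangulation) (i : ℤ) : Z.seq (i + 2) ≠ Z.seq i := by
  intro h
  obtain ⟨A, B, ⟨hAf, hAu, hAv⟩, ⟨hBf, hBu, hBv⟩, hne, -⟩ := two_faces hT (Z.seq_adj i)
  have hsub : ∀ C : Finset V, Z.seq i ∈ C → Z.seq (i+1) ∈ C →
      ({Z.seq i, Z.seq (i + 1), Z.seq (i + 2)} : Finset V) ⊆ C := by
    intro C h0 h1
    rw [h]
    intro w hw
    simp only [Finset.mem_insert, Finset.mem_singleton] at hw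
    rcases hw with rfl | rfl | rfl <;> assumption
  have hA' := Z.face_unique i A hAf (hsub A hAu hAv)
  have hB' := Z.face_unique i B hBf (hsub B hBu hBv)
  exact hne (hA'.trans hB'.symm)

lemma seq_ne' (i : ℤ) : Z.seq (i + 1) ≠ Z.seq (i + 2) := by
  have := Z.seq_ne (i + 1)
  rwa [show i + 1 + 1 = i + 2 by ring] at this

lemma triple_card (hT : T.IsTriangulation) (i : ℤ) :
    ({Z.seq i, Z.seq (i + 1), Z.seq (i + 2)} : Finset V).card = 3 := by
  rw [Finset.card_insert_of_notMem, Finset.card_insert_of_notMem, Finset.card_singleton]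
  · simp only [Finset.mem_singleton]
    exact Z.seq_ne' i
  · simp only [Finset.mem_insert, Finset.mem_singleton]
    push_neg
    exact ⟨Z.seq_ne i, fun hc => Z.seq_ne_two hT i hc.symm⟩

lemma face_eq_triple (hT : T.IsTriangulation) (i : ℤ) :
    Z.face i = {Z.seq i, Z.seq (i + 1), Z.seq (i + 2)} := by
  refine (Finset.eq_of_subset_of_card_le (Z.subset_face i) ?_).symm
  rw [Z.triple_card hT i, hT.face_card _ (Z.face_mem i)]

lemma face_congr (hT : T.IsTriangulation) {i j : ℤ} (h0 : Z.seq i = Z.seq j)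
    (h1 : Z.seq (i + 1) = Z.seq (j + 1)) (h2 : Z.seq (i + 2) = Z.seq (j + 2)) :
    Z.face i = Z.face j := by
  rw [Z.face_eq_triple hT i, Z.face_eq_triple hT j, h0, h1, h2]

lemma face_congr_rev (hT : T.IsTriangulation) {i j : ℤ} (h0 : Z.seq i = Z.seq (j + 2))
    (h1 : Z.seq (i + 1) = Z.seq (j + 1)) (h2 : Z.seq (i + 2) = Z.seq j) :
    Z.face i = Z.face j := by
  rw [Z.face_eq_triple hT i, Z.face_eq_triple hT j, h0, h1, h2]
  ext w
  simp only [Finset.mem_insert, Finset.mem_singleton]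
  tauto

lemma seq_det (hT : T.IsTriangulation) {i j : ℤ} (h0 : Z.seq i = Z.seq j)
    (h1 : Z.seq (i + 1) = Z.seq (j + 1)) (hf : Z.face i = Z.face j) :
    Z.seq (i + 2) = Z.seq (j + 2) := by
  have ht : ({Z.seq i, Z.seq (i+1), Z.seq (i+2)} : Finset V)
      = {Z.seq i, Z.seq (i+1), Z.seq (j+2)} := by
    rw [← Z.face_eq_triple hT i, hf, Z.face_eq_triple hT j, h0, h1]
  refine (third_eq ht ?_ ?_).symm
  · rw [h0]; exact Z.seq_ne_two hT j
  · rw [h1]; exact fun hc => Z.seq_ne' j hc.symm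

end Zigzag

end PreTriangulation
namespace PreTriangulation

variable {V : Type u} [DecidableEq V] {T : PreTriangulation V}

/-- among the two faces of an edge, two faces that differ from a third one are equal -/
lemma faces_eq_of_ne (hT : T.IsTriangulation) {u v : V} (hadj : T.graph.Adj u v)
    {C D E : Finset V} (hC : C ∈ T.faces) (hD : D ∈ T.faces) (hE : E ∈ T.faces)
    (hCu : u ∈ C) (hCv : v ∈ C) (hDu : u ∈ D) (hDv : v ∈ D) (hEu : u ∈ E) (hEv : v ∈ E)
    (hDC : D ≠ C) (hEC : E ≠ C) : D = E := by
  obtain ⟨A, B, ⟨hAf, -, -⟩, ⟨hBf, -, -⟩, hAB, hcl⟩ := two_faces hT hadj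
  rcases hcl C hC hCu hCv with rfl | rfl
  · have h1 : D = B := (hcl D hD hDu hDv).resolve_left hDC
    have h2 : E = B := (hcl E hE hEu hEv).resolve_left hEC
    exact h1.trans h2.symm
  · have h1 : D = A := (hcl D hD hDu hDv).resolve_right hDC
    have h2 : E = A := (hcl E hE hEu hEv).resolve_right hEC
    exact h1.trans h2.symm

namespace Zigzag

variable (Z : T.Zigzag)

lemma mem_face_0 (i : ℤ) : Z.seq i ∈ Z.face i := Z.subset_face i (by simp)
lemma mem_face_1 (i : ℤ) : Z.seq (i + 1) ∈ Z.face i := Z.subset_face i (by simp)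
lemma mem_face_2 (i : ℤ) : Z.seq (i + 2) ∈ Z.face i := Z.subset_face i (by simp)

lemma seq_adj' (i : ℤ) : T.graph.Adj (Z.seq (i + 1)) (Z.seq (i + 2)) := by
  have := Z.seq_adj (i + 1); rwa [show i + 1 + 1 = i + 2 by ring] at this

lemma face_ne' (i : ℤ) : Z.face (i + 1) ≠ Z.face i := (Z.face_ne i).symm

lemma face_det_fwd (hT : T.IsTriangulation) {i j : ℤ} (h0 : Z.seq i = Z.seq j)
    (h1 : Z.seq (i + 1) = Z.seq (j + 1)) (hf : Z.face i = Z.face j) :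
    Z.face (i + 1) = Z.face (j + 1) := by
  have h2 : Z.seq (i + 2) = Z.seq (j + 2) := Z.seq_det hT h0 h1 hf
  refine faces_eq_of_ne hT (Z.seq_adj' i) (Z.face_mem i) (Z.face_mem (i+1)) (Z.face_mem (j+1))
    (Z.mem_face_1 i) (Z.mem_face_2 i) (Z.mem_face_0 (i+1)) ?_ ?_ ?_
    (Z.face_ne' i) ?_
  · have := Z.mem_face_1 (i+1); rwa [show i + 1 + 1 = i + 2 by ring] at this
  · have := Z.mem_face_0 (j+1); rwa [← h1] at this
  · have := Z.mem_face_1 (j+1); rw [show j + 1 + 1 = j + 2 by ring] at this; rwa [← h2] at this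
  · rw [hf]; exact Z.face_ne' j

lemma face_det_bwd (hT : T.IsTriangulation) {i j : ℤ} (h0 : Z.seq i = Z.seq j)
    (h1 : Z.seq (i + 1) = Z.seq (j + 1)) (hf : Z.face i = Z.face j) :
    Z.face (i - 1) = Z.face (j - 1) ∧ Z.seq (i - 1) = Z.seq (j - 1) := by
  have hface : Z.face (i - 1) = Z.face (j - 1) := by
    refine faces_eq_of_ne hT (Z.seq_adj i) (Z.face_mem i) (Z.face_mem (i-1)) (Z.face_mem (j-1))
      (Z.mem_face_0 i) (Z.mem_face_1 i) ?_ ?_ ?_ ?_ ?_ ?_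
    · have := Z.mem_face_1 (i-1); rwa [show i - 1 + 1 = i by ring] at this
    · have := Z.mem_face_2 (i-1); rwa [show i - 1 + 2 = i + 1 by ring] at this
    · have := Z.mem_face_1 (j-1); rw [show j - 1 + 1 = j by ring] at this; rwa [← h0] at this
    · have := Z.mem_face_2 (j-1); rw [show j - 1 + 2 = j + 1 by ring] at this; rwa [← h1] at this
    · have := Z.face_ne (i-1); rwa [show i - 1 + 1 = i by ring] at this
    · have := Z.face_ne (j-1); rw [show j - 1 + 1 = j by ring] at this; rw [hf]; exact this
  refine ⟨hface, ?_⟩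
  have e1 : Z.face (i-1) = {Z.seq (i-1), Z.seq i, Z.seq (i+1)} := by
    have := Z.face_eq_triple hT (i-1)
    rwa [show i - 1 + 1 = i by ring, show i - 1 + 2 = i + 1 by ring] at this
  have e2 : Z.face (j-1) = {Z.seq (j-1), Z.seq j, Z.seq (j+1)} := by
    have := Z.face_eq_triple hT (j-1)
    rwa [show j - 1 + 1 = j by ring, show j - 1 + 2 = j + 1 by ring] at this
  have hmem : Z.seq (i - 1) ∈ ({Z.seq (j-1), Z.seq j, Z.seq (j+1)} : Finset V) := by
    rw [← e2, ← hface, e1]; simp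
  simp only [Finset.mem_insert, Finset.mem_singleton] at hmem
  rcases hmem with h | h | h
  · exact h
  · exfalso; rw [← h0] at h
    have := Z.seq_ne (i-1); rw [show i - 1 + 1 = i by ring] at this; exact this h
  · exfalso; rw [← h1] at h
    have := Z.seq_ne_two hT (i-1); rw [show i - 1 + 2 = i + 1 by ring] at this; exact this h.symm

lemma flag_propagate (hT : T.IsTriangulation) {i j : ℤ} (h0 : Z.seq i = Z.seq j)
    (h1 : Z.seq (i + 1) = Z.seq (j + 1)) (hf : Z.face i = Z.face j) :
    ∀ t : ℤ, Z.seq (i + t) = Z.seq (j + t) := by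
  have key : ∀ t : ℤ, Z.seq (i + t) = Z.seq (j + t) ∧ Z.seq (i + t + 1) = Z.seq (j + t + 1)
      ∧ Z.face (i + t) = Z.face (j + t) := by
    intro t
    induction t using Int.induction_on with
    | zero => simpa using ⟨h0, h1, hf⟩
    | succ k ih =>
      obtain ⟨a0, a1, af⟩ := ih
      have h2 := Z.seq_det hT a0 a1 af
      have hfn := Z.face_det_fwd hT a0 a1 af
      refine ⟨?_, ?_, ?_⟩
      · rwa [show i + (k+1) = i + k + 1 by ring, show j + (k+1) = j + k + 1 by ring]
      · rwa [show i + (k+1) + 1 = i + k + 2 by ring, show j + (k+1) + 1 = j + k + 2 by ring]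
      · rwa [show i + (k+1) = i + k + 1 by ring, show j + (k+1) = j + k + 1 by ring]
    | pred k ih =>
      obtain ⟨a0, a1, af⟩ := ih
      obtain ⟨hfb, hsb⟩ := Z.face_det_bwd hT a0 a1 af
      refine ⟨?_, ?_, ?_⟩
      · rwa [show i + (-(k:ℤ) - 1) = i + -(k:ℤ) - 1 by ring,
          show j + (-(k:ℤ) - 1) = j + -(k:ℤ) - 1 by ring]
      · rwa [show i + (-(k:ℤ) - 1) + 1 = i + -(k:ℤ) by ring,
          show j + (-(k:ℤ) - 1) + 1 = j + -(k:ℤ) by ring]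
      · rwa [show i + (-(k:ℤ) - 1) = i + -(k:ℤ) - 1 by ring,
          show j + (-(k:ℤ) - 1) = j + -(k:ℤ) - 1 by ring]
  exact fun t => (key t).1

lemma period_dvd (m : ℤ) (hm : ∀ s : ℤ, Z.seq (s + m) = Z.seq s) : (Z.n : ℤ) ∣ m := by
  have npos : (0:ℤ) < (Z.n : ℤ) := by
    have := Z.three_lt_n; exact_mod_cast Nat.pos_of_ne_zero (by omega)
  have hmul : ∀ (k : ℤ) (s : ℤ), Z.seq (s + (Z.n : ℤ) * k) = Z.seq s := by
    intro k
    induction k using Int.induction_on with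
    | zero => simp
    | succ k ih =>
      intro s
      have h1 := Z.periodic (s + (Z.n : ℤ) * k)
      rw [show s + (Z.n:ℤ) * k + (Z.n:ℤ) = s + (Z.n:ℤ) * (k+1) by ring] at h1
      rw [h1]; exact ih s
    | pred k ih =>
      intro s
      have h1 := Z.periodic (s + (Z.n : ℤ) * (-(k:ℤ) - 1))
      rw [show s + (Z.n:ℤ) * (-(k:ℤ) - 1) + (Z.n:ℤ) = s + (Z.n:ℤ) * (-(k:ℤ)) by ring] at h1
      rw [← h1]; exact ih s
  set r := m % (Z.n : ℤ) with hr
  have hr0 : 0 ≤ r := Int.emod_nonneg m (ne_of_gt npos)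
  have hrn : r < (Z.n : ℤ) := Int.emod_lt_of_pos m npos
  have hper : ∀ s, Z.seq (s + r) = Z.seq s := by
    intro s
    have e : s + r + (Z.n:ℤ) * (m / (Z.n:ℤ)) = s + m := by
      have := Int.emod_add_mul_ediv m (Z.n : ℤ); rw [hr]; ring_nf; linarith [this]
    calc Z.seq (s + r) = Z.seq (s + r + (Z.n:ℤ) * (m / (Z.n:ℤ))) := (hmul _ _).symm
      _ = Z.seq (s + m) := by rw [e]
      _ = Z.seq s := hm s
  by_cases h0 : r = 0
  · exact Int.dvd_of_emod_eq_zero h0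
  · exfalso
    have hpos : 0 < r.toNat := by omega
    have hle : Z.n ≤ r.toNat := by
      refine Z.n_minimal r.toNat hpos (fun s => ?_)
      have h2 := hper s
      rwa [show ((r.toNat : ℕ) : ℤ) = r from Int.toNat_of_nonneg hr0]
    omega

lemma flag_inj (hT : T.IsTriangulation) {i j : ℤ} (h0 : Z.seq i = Z.seq j)
    (h1 : Z.seq (i + 1) = Z.seq (j + 1)) (hf : Z.face i = Z.face j) :
    (Z.n : ℤ) ∣ (j - i) := by
  refine Z.period_dvd (j - i) (fun s => ?_)
  have := Z.flag_propagate hT h0 h1 hf (s - i)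
  rw [show i + (s - i) = s by ring, show j + (s - i) = s + (j - i) by ring] at this
  exact this.symm

lemma face_periodic (hT : T.IsTriangulation) (t : ℤ) : Z.face (t + Z.n) = Z.face t := by
  refine Z.face_congr hT (Z.periodic t) ?_ ?_
  · have := Z.periodic (t+1); rwa [show t + 1 + (Z.n:ℤ) = t + (Z.n:ℤ) + 1 by ring] at this
  · have := Z.periodic (t+2); rwa [show t + 2 + (Z.n:ℤ) = t + (Z.n:ℤ) + 2 by ring] at this

lemma no_self_reverse (hT : T.IsTriangulation) : ¬ ∃ k : ℤ, ∀ t : ℤ, Z.seq t = Z.seq (k - t) := by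
  rintro ⟨k, hk⟩
  rcases Int.even_or_odd k with ⟨u, hu⟩ | ⟨u, hu⟩
  · have h := hk (u - 1)
    rw [show k - (u - 1) = u + 1 by omega] at h
    refine Z.seq_ne_two hT (u - 1) ?_
    rw [show u - 1 + 2 = u + 1 by ring]; exact h.symm
  · have FR : ∀ t : ℤ, Z.face (k - t - 2) = Z.face t := by
      intro t
      refine Z.face_congr_rev hT ?_ ?_ ?_
      · have h := (hk (t + 2)).symm; rwa [show k - (t + 2) = k - t - 2 by ring] at h
      · have := (hk (t + 1)).symm; rwa [show k - (t + 1) = k - t - 2 + 1 by ring] at this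
      · have := (hk t).symm; rwa [show k - t = k - t - 2 + 2 by ring] at this
    have h := FR (u - 1)
    rw [show k - (u - 1) - 2 = u by omega] at h
    refine Z.face_ne (u - 1) ?_
    rw [show u - 1 + 1 = u by ring]; exact h.symm

lemma no_reverse_pass (hT : T.IsTriangulation) {a b : ℤ} (h1 : Z.seq b = Z.seq (a + 1))
    (h2 : Z.seq (b + 1) = Z.seq a) (h3 : Z.face a ≠ Z.face b) : False := by
  have hbase : Z.face a = Z.face (b - 1) := by
    refine faces_eq_of_ne hT (Z.seq_adj a) (Z.face_mem b) (Z.face_mem a) (Z.face_mem (b-1))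
      ?_ ?_ (Z.mem_face_0 a) (Z.mem_face_1 a) ?_ ?_ h3 ?_
    · have := Z.mem_face_1 b; rwa [h2] at this
    · have := Z.mem_face_0 b; rwa [h1] at this
    · have := Z.mem_face_2 (b-1); rw [show b - 1 + 2 = b + 1 by ring] at this; rwa [h2] at this
    · have := Z.mem_face_1 (b-1); rw [show b - 1 + 1 = b by ring] at this; rwa [h1] at this
    · have := Z.face_ne (b-1); rw [show b - 1 + 1 = b by ring] at this; exact this
  have R : ∀ t : ℤ, Z.seq (a + t) = Z.seq (b + 1 - t) ∧ Z.seq (a + t + 1) = Z.seq (b - t)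
      ∧ Z.face (a + t) = Z.face (b - t - 1) := by
    intro t
    induction t using Int.induction_on with
    | zero =>
      refine ⟨?_, ?_, ?_⟩
      · rw [show a + (0:ℤ) = a by ring, show b + 1 - (0:ℤ) = b + 1 by ring]; exact h2.symm
      · rw [show a + (0:ℤ) + 1 = a + 1 by ring, show b - (0:ℤ) = b by ring]; exact h1.symm
      · rw [show a + (0:ℤ) = a by ring, show b - (0:ℤ) - 1 = b - 1 by ring]; exact hbase
    | succ k ih =>
      obtain ⟨r0, r1, rf⟩ := ih
      have e1 : Z.face (a + k) = {Z.seq (a+k), Z.seq (a+k+1), Z.seq (a+k+2)} :=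
        Z.face_eq_triple hT (a+k)
      have e2 : Z.face (b - k - 1) = {Z.seq (b-k-1), Z.seq (b-k), Z.seq (b-k+1)} := by
        have := Z.face_eq_triple hT (b-k-1)
        rwa [show b - k - 1 + 1 = b - k by ring, show b - k - 1 + 2 = b - k + 1 by ring] at this
      have hseq2 : Z.seq (a + k + 2) = Z.seq (b - k - 1) := by
        have hmem : Z.seq (a+k+2) ∈ ({Z.seq (b-k-1), Z.seq (b-k), Z.seq (b-k+1)} : Finset V) := by
          rw [← e2, ← rf, e1]; simp
        simp only [Finset.mem_insert, Finset.mem_singleton] at hmem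
        rcases hmem with h | h | h
        · exact h
        · exfalso; rw [← r1] at h; exact Z.seq_ne' (a+k) h.symm
        · exfalso
          rw [show b - k + 1 = b + 1 - k by ring, ← r0] at h
          exact Z.seq_ne_two hT (a+k) h
      have hface2 : Z.face (a + k + 1) = Z.face (b - k - 2) := by
        refine faces_eq_of_ne hT (Z.seq_adj' (a+k)) (Z.face_mem (a+k)) (Z.face_mem (a+k+1))
          (Z.face_mem (b-k-2)) (Z.mem_face_1 (a+k)) (Z.mem_face_2 (a+k)) (Z.mem_face_0 (a+k+1))
          ?_ ?_ ?_ (Z.face_ne' (a+k)) ?_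
        · have := Z.mem_face_1 (a+k+1); rwa [show a + k + 1 + 1 = a + k + 2 by ring] at this
        · have := Z.mem_face_2 (b-k-2); rw [show b - k - 2 + 2 = b - k by ring] at this
          rwa [← r1] at this
        · have := Z.mem_face_1 (b-k-2); rw [show b - k - 2 + 1 = b - k - 1 by ring] at this
          rwa [← hseq2] at this
        · have := Z.face_ne (b-k-2); rw [show b - k - 2 + 1 = b - k - 1 by ring] at this
          rw [rf]; exact this
      refine ⟨?_, ?_, ?_⟩
      · rw [show a + ((k:ℤ)+1) = a + k + 1 by ring, show b + 1 - ((k:ℤ)+1) = b - k by ring]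
        exact r1
      · rw [show a + ((k:ℤ)+1) + 1 = a + k + 2 by ring, show b - ((k:ℤ)+1) = b - k - 1 by ring]
        exact hseq2
      · rw [show a + ((k:ℤ)+1) = a + k + 1 by ring, show b - ((k:ℤ)+1) - 1 = b - k - 2 by ring]
        exact hface2
    | pred k ih =>
      obtain ⟨r0, r1, rf⟩ := ih
      have hfaceB : Z.face (a + -(k:ℤ) - 1) = Z.face (b + (k:ℤ)) := by
        refine faces_eq_of_ne hT (Z.seq_adj (a + -(k:ℤ))) (Z.face_mem (a + -(k:ℤ)))
          (Z.face_mem (a + -(k:ℤ) - 1)) (Z.face_mem (b + (k:ℤ)))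
          (Z.mem_face_0 (a + -(k:ℤ))) (Z.mem_face_1 (a + -(k:ℤ))) ?_ ?_ ?_ ?_ ?_ ?_
        · have := Z.mem_face_1 (a + -(k:ℤ) - 1)
          rwa [show a + -(k:ℤ) - 1 + 1 = a + -(k:ℤ) by ring] at this
        · have := Z.mem_face_2 (a + -(k:ℤ) - 1)
          rwa [show a + -(k:ℤ) - 1 + 2 = a + -(k:ℤ) + 1 by ring] at this
        · have := Z.mem_face_1 (b + (k:ℤ))
          rw [show b + (k:ℤ) + 1 = b + 1 - -(k:ℤ) by ring, ← r0] at this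
          exact this
        · have := Z.mem_face_0 (b + (k:ℤ))
          rw [show b + (k:ℤ) = b - -(k:ℤ) by ring, ← r1] at this
          rw [show b - -(k:ℤ) = b + (k:ℤ) by ring] at this; exact this
        · have := Z.face_ne (a + -(k:ℤ) - 1)
          rw [show a + -(k:ℤ) - 1 + 1 = a + -(k:ℤ) by ring] at this; exact this
        · have := Z.face_ne (b - -(k:ℤ) - 1)
          rw [show b - -(k:ℤ) - 1 + 1 = b + (k:ℤ) by ring] at this
          rw [show b + (k:ℤ) = b - -(k:ℤ) by ring, rf]
          exact fun hc => this (by rw [show b - -(k:ℤ) = b + (k:ℤ) by ring] at hc ⊢; exact hc.symm)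
      have hseqB : Z.seq (a + -(k:ℤ) - 1) = Z.seq (b + (k:ℤ) + 2) := by
        have e1 : Z.face (a + -(k:ℤ) - 1)
            = {Z.seq (a + -(k:ℤ) - 1), Z.seq (a + -(k:ℤ)), Z.seq (a + -(k:ℤ) + 1)} := by
          have := Z.face_eq_triple hT (a + -(k:ℤ) - 1)
          rwa [show a + -(k:ℤ) - 1 + 1 = a + -(k:ℤ) by ring,
            show a + -(k:ℤ) - 1 + 2 = a + -(k:ℤ) + 1 by ring] at this
        have e2 : Z.face (b + (k:ℤ))
            = {Z.seq (b + (k:ℤ)), Z.seq (b + (k:ℤ) + 1), Z.seq (b + (k:ℤ) + 2)} :=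
          Z.face_eq_triple hT (b + (k:ℤ))
        have hmem : Z.seq (a + -(k:ℤ) - 1)
            ∈ ({Z.seq (b + (k:ℤ)), Z.seq (b + (k:ℤ) + 1), Z.seq (b + (k:ℤ) + 2)} : Finset V) := by
          rw [← e2, ← hfaceB, e1]; simp
        simp only [Finset.mem_insert, Finset.mem_singleton] at hmem
        rcases hmem with h | h | h
        · exfalso
          rw [show b + (k:ℤ) = b - -(k:ℤ) by ring, ← r1] at h
          have := Z.seq_ne_two hT (a + -(k:ℤ) - 1)
          rw [show a + -(k:ℤ) - 1 + 2 = a + -(k:ℤ) + 1 by ring] at this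
          exact this h.symm
        · exfalso
          rw [show b + (k:ℤ) + 1 = b + 1 - -(k:ℤ) by ring, ← r0] at h
          have := Z.seq_ne (a + -(k:ℤ) - 1)
          rw [show a + -(k:ℤ) - 1 + 1 = a + -(k:ℤ) by ring] at this
          exact this h
        · exact h
      refine ⟨?_, ?_, ?_⟩
      · rw [show a + (-(k:ℤ) - 1) = a + -(k:ℤ) - 1 by ring,
          show b + 1 - (-(k:ℤ) - 1) = b + (k:ℤ) + 2 by ring]
        exact hseqB
      · rw [show a + (-(k:ℤ) - 1) + 1 = a + -(k:ℤ) by ring,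
          show b - (-(k:ℤ) - 1) = b + 1 - -(k:ℤ) by ring]
        exact r0
      · rw [show a + (-(k:ℤ) - 1) = a + -(k:ℤ) - 1 by ring,
          show b - (-(k:ℤ) - 1) - 1 = b + (k:ℤ) by ring]
        exact hfaceB
  refine Z.no_self_reverse hT ⟨a + b + 1, fun s => ?_⟩
  have := (R (s - a)).1
  rwa [show a + (s - a) = s by ring, show b + 1 - (s - a) = a + b + 1 - s by ring] at this

end Zigzag
end PreTriangulation
set_option linter.unusedSectionVars false

namespace PreTriangulation

lemma int_dvd_small {n : ℕ} {m : ℤ} (h : (n:ℤ) ∣ m) (hlo : -(n:ℤ) < m) (hhi : m < n) :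
    m = 0 := by
  obtain ⟨c, rfl⟩ := h
  rcases lt_trichotomy c 0 with hc | hc | hc
  · exfalso; nlinarith
  · rw [hc, mul_zero]
  · exfalso; nlinarith

lemma triple_perm {V : Type u} [DecidableEq V] (a b c : V) :
    ({b, c, a} : Finset V) = {a, b, c} := by
  ext w; simp only [Finset.mem_insert, Finset.mem_singleton]; tauto

lemma triple_perm2 {V : Type u} [DecidableEq V] (a b c : V) :
    ({c, a, b} : Finset V) = {a, b, c} := by
  ext w; simp only [Finset.mem_insert, Finset.mem_singleton]; tauto

variable {V : Type u} [DecidableEq V] {T : PreTriangulation V}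

namespace Zigzag

variable (Z : T.Zigzag) (hT : T.IsTriangulation) {x y z : V} {F : Finset V}

section Visits

variable (hFxyz : F = {x, y, z}) (hxy : x ≠ y) (hxz : x ≠ z) (hyz : y ≠ z)
  {i : ℤ} {p q : ℕ} (hp : 0 < p) (hpq : p < q) (hqn : q < Z.n)
  (h1 : Z.TripleAt i x y z) (h2 : Z.TripleAt (i + p) y z x) (h3 : Z.TripleAt (i + q) z x y)

include hT hFxyz h1 h2 h3

lemma visit0a : Z.face i = F := by
  rw [Z.face_eq_triple hT i, h1.1, h1.2.1, h1.2.2, hFxyz]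

lemma visit0b : Z.face (i + p) = F := by
  rw [Z.face_eq_triple hT (i + p), h2.1, h2.2.1, h2.2.2, triple_perm, hFxyz]

lemma visit0c : Z.face (i + q) = F := by
  rw [Z.face_eq_triple hT (i + q), h3.1, h3.2.1, h3.2.2, triple_perm2, hFxyz]

lemma visit_ne1 : Z.face (i + 1) ≠ F := by
  have h := Z.face_ne i
  rw [Z.visit0a hT hFxyz h1 h2 h3] at h
  exact fun hc => h hc.symm

lemma visit_ne2 : Z.face (i + p + 1) ≠ F := by
  have h := Z.face_ne (i + p)
  rw [Z.visit0b hT hFxyz h1 h2 h3] at h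
  exact fun hc => h hc.symm

lemma visit_ne3 : Z.face (i + q + 1) ≠ F := by
  have h := Z.face_ne (i + q)
  rw [Z.visit0c hT hFxyz h1 h2 h3] at h
  exact fun hc => h hc.symm

include hxy hxz hyz hp hpq hqn

lemma gap1 : 3 ≤ p := by
  by_contra hcon
  have hcase : p = 1 ∨ p = 2 := by omega
  rcases hcase with hc | hc
  · refine Z.visit_ne1 hT hFxyz h1 h2 h3 ?_
    have c1 : Z.seq (i + 1) = y := h1.2.1
    have c2 : Z.seq (i + 1 + 1) = z := by
      rw [show i + 1 + 1 = i + 2 by ring]; exact h1.2.2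
    have c3 : Z.seq (i + 1 + 2) = x := by
      have := h2.2.2; rwa [show i + (p:ℤ) + 2 = i + 1 + 2 by rw [hc]; push_cast; ring] at this
    rw [Z.face_eq_triple hT (i + 1), c1, c2, c3, triple_perm, hFxyz]
  · have ha : Z.seq (i + p) = y := h2.1
    rw [show i + (p:ℤ) = i + 2 by rw [hc]; push_cast; ring] at ha
    exact hyz (h1.2.2.symm.trans ha).symm

lemma gap2 : p + 3 ≤ q := by
  by_contra hcon
  have hcase : q = p + 1 ∨ q = p + 2 := by omega
  rcases hcase with hc | hc
  · refine Z.visit_ne2 hT hFxyz h1 h2 h3 ?_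
    have c1 : Z.seq (i + p + 1) = z := by
      have := h3.1; rwa [show i + (q:ℤ) = i + p + 1 by rw [hc]; push_cast; ring] at this
    have c2 : Z.seq (i + p + 1 + 1) = x := by
      have := h3.2.1; rwa [show i + (q:ℤ) + 1 = i + p + 1 + 1 by rw [hc]; push_cast; ring] at this
    have c3 : Z.seq (i + p + 1 + 2) = y := by
      have := h3.2.2; rwa [show i + (q:ℤ) + 2 = i + p + 1 + 2 by rw [hc]; push_cast; ring] at this
    rw [Z.face_eq_triple hT (i + p + 1), c1, c2, c3, triple_perm2, hFxyz]
  · have ha : Z.seq (i + q) = z := h3.1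
    rw [show i + (q:ℤ) = i + p + 2 by rw [hc]; push_cast; ring] at ha
    have hb : Z.seq (i + p + 2) = x := by
      have := h2.2.2; rwa [show i + (p:ℤ) + 2 = i + p + 2 by ring] at this
    exact hxz (hb.symm.trans ha)

lemma gap3 : q + 3 ≤ Z.n := by
  by_contra hcon
  have hcase : Z.n = q + 1 ∨ Z.n = q + 2 := by omega
  rcases hcase with hc | hc
  · refine Z.visit_ne3 hT hFxyz h1 h2 h3 ?_
    have hper := Z.face_periodic hT i
    rw [Z.visit0a hT hFxyz h1 h2 h3] at hper
    rw [show i + (q:ℤ) + 1 = i + (Z.n:ℤ) by rw [hc]; push_cast; ring]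
    exact hper
  · have ha : Z.seq (i + q + 2) = y := by
      have := h3.2.2; rwa [show i + (q:ℤ) + 2 = i + q + 2 by ring] at this
    have hb : Z.seq (i + q + 2) = x := by
      have := Z.periodic i
      rw [h1.1] at this
      rwa [show i + (Z.n:ℤ) = i + q + 2 by rw [hc]; push_cast; ring] at this
    exact hxy (hb.symm.trans ha)

lemma visit_class (t : ℤ) (hft : Z.face t = F) :
    (Z.n:ℤ) ∣ (t - i) ∨ (Z.n:ℤ) ∣ (t - (i + p)) ∨ (Z.n:ℤ) ∣ (t - (i + q)) := by
  have htr : ({Z.seq t, Z.seq (t+1), Z.seq (t+2)} : Finset V) = {x, y, z} := by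
    rw [← Z.face_eq_triple hT t, hft, hFxyz]
  have m0 : Z.seq t = x ∨ Z.seq t = y ∨ Z.seq t = z := by
    have : Z.seq t ∈ ({x, y, z} : Finset V) := by rw [← htr]; simp
    simpa using this
  have m1 : Z.seq (t+1) = x ∨ Z.seq (t+1) = y ∨ Z.seq (t+1) = z := by
    have : Z.seq (t+1) ∈ ({x, y, z} : Finset V) := by rw [← htr]; simp
    simpa using this
  have hne01 := Z.seq_ne t
  rcases m0 with h0 | h0 | h0 <;> rcases m1 with hb | hb | hb
  · exact absurd (h0.trans hb.symm) hne01
  · exact Or.inl (Z.flag_inj hT (h1.1.trans h0.symm) (h1.2.1.trans hb.symm)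
      ((Z.visit0a hT hFxyz h1 h2 h3).trans hft.symm))
  · exfalso
    refine Z.no_reverse_pass hT (a := i + p + 1) (b := t) ?_ ?_ ?_
    · rw [h0, show i + (p:ℤ) + 1 + 1 = (i + (p:ℤ)) + 2 by ring]; exact h2.2.2.symm
    · rw [hb, show i + (p:ℤ) + 1 = (i + (p:ℤ)) + 1 by ring]; exact h2.2.1.symm
    · rw [hft]; exact Z.visit_ne2 hT hFxyz h1 h2 h3
  · exfalso
    refine Z.no_reverse_pass hT (a := i + q + 1) (b := t) ?_ ?_ ?_
    · rw [h0, show i + (q:ℤ) + 1 + 1 = (i + (q:ℤ)) + 2 by ring]; exact h3.2.2.symm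
    · rw [hb, show i + (q:ℤ) + 1 = (i + (q:ℤ)) + 1 by ring]; exact h3.2.1.symm
    · rw [hft]; exact Z.visit_ne3 hT hFxyz h1 h2 h3
  · exact absurd (h0.trans hb.symm) hne01
  · refine Or.inr (Or.inl (Z.flag_inj hT (h2.1.trans h0.symm) ?_
      ((Z.visit0b hT hFxyz h1 h2 h3).trans hft.symm)))
    exact h2.2.1.trans hb.symm
  · refine Or.inr (Or.inr (Z.flag_inj hT (h3.1.trans h0.symm) ?_
      ((Z.visit0c hT hFxyz h1 h2 h3).trans hft.symm)))
    exact h3.2.1.trans hb.symm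
  · exfalso
    refine Z.no_reverse_pass hT (a := i + 1) (b := t) ?_ ?_ ?_
    · rw [h0, show i + 1 + 1 = i + 2 by ring]; exact h1.2.2.symm
    · rw [hb]; exact h1.2.1.symm
    · rw [hft]; exact Z.visit_ne1 hT hFxyz h1 h2 h3
  · exact absurd (h0.trans hb.symm) hne01

lemma not_visit (r : ℤ) (h0 : 0 < r) (hrn : r < Z.n) (hr1 : r ≠ p) (hr2 : r ≠ q) :
    Z.face (i + r) ≠ F := by
  intro hf
  have hpn : (p:ℤ) < (Z.n:ℤ) := by exact_mod_cast lt_trans hpq hqn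
  have hqn' : (q:ℤ) < (Z.n:ℤ) := by exact_mod_cast hqn
  have hp' : (0:ℤ) < p := by exact_mod_cast hp
  rcases Z.visit_class hT hFxyz hxy hxz hyz hp hpq hqn h1 h2 h3 (i + r) hf with h | h | h
  · have h' : i + r - i = 0 := int_dvd_small h (by omega) (by omega)
    omega
  · have h' : i + r - (i + p) = 0 := int_dvd_small h (by omega) (by omega)
    have : r = p := by omega
    exact hr1 this
  · have h' : i + r - (i + q) = 0 := int_dvd_small h (by omega) (by omega)
    have : r = q := by omega
    exact hr2 this

end Visits

end Zigzag
end PreTriangulation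
namespace PreTriangulation

lemma triple_rev {V : Type u} [DecidableEq V] (a b c : V) :
    ({c, b, a} : Finset V) = {a, b, c} := by
  ext w; simp only [Finset.mem_insert, Finset.mem_singleton]; tauto

variable {V : Type u} [DecidableEq V] {T : PreTriangulation V}

/-- The reverse of a zigzag. -/
def Zigzag.rev (Z : T.Zigzag) : T.Zigzag where
  n := Z.n
  three_lt_n := Z.three_lt_n
  seq := fun t => Z.seq (-t)
  periodic := by
    intro i
    have := Z.periodic (-(i + Z.n))
    rw [show -(i + (Z.n:ℤ)) + (Z.n:ℤ) = -i by ring] at this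
    exact this.symm
  n_minimal := by
    intro m hm h
    refine Z.n_minimal m hm (fun s => ?_)
    have := h (-(s + m))
    rw [show -(-(s + (m:ℤ)) + (m:ℤ)) = s by ring, show -(-(s + (m:ℤ))) = s + m by ring] at this
    exact this.symm
  seq_ne := by
    intro i
    have := Z.seq_ne (-(i+1))
    rw [show -(i+1) + 1 = -i by ring] at this
    exact fun hc => this hc.symm
  seq_adj := by
    intro i
    have := (Z.seq_adj (-(i+1))).symm
    rwa [show -(i+1) + 1 = -i by ring] at this
  face := fun t => Z.face (-t - 2)
  face_mem := fun i => Z.face_mem _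
  subset_face := by
    intro i w hw
    simp only [Finset.mem_insert, Finset.mem_singleton] at hw
    have hs := Z.subset_face (-i - 2)
    rcases hw with rfl | rfl | rfl
    · refine hs ?_
      rw [show -i - 2 + 2 = -i by ring]; simp
    · refine hs ?_
      rw [show -i - 2 + 1 = -(i+1) by ring]; simp
    · refine hs ?_
      rw [show -(i + 2) = -i - 2 by ring]; simp
  face_unique := by
    intro i G hG hsub
    refine Z.face_unique (-i - 2) G hG ?_
    intro w hw
    simp only [Finset.mem_insert, Finset.mem_singleton] at hw
    refine hsub ?_
    rcases hw with rfl | rfl | rfl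
    · rw [show -i - 2 = -(i + 2) by ring]; simp
    · rw [show -i - 2 + 1 = -(i+1) by ring]; simp
    · rw [show -i - 2 + 2 = -i by ring]; simp
  face_ne := by
    intro i
    have h := Z.face_ne (-i - 3)
    rw [show -i - 3 + 1 = -i - 2 by ring] at h
    show Z.face (-i - 2) ≠ Z.face (-(i+1) - 2)
    rw [show -(i+1) - 2 = -i - 3 by ring]
    exact fun hc => h hc.symm

@[simp] lemma Zigzag.rev_seq (Z : T.Zigzag) (t : ℤ) : Z.rev.seq t = Z.seq (-t) := rfl
@[simp] lemma Zigzag.rev_face (Z : T.Zigzag) (t : ℤ) : Z.rev.face t = Z.face (-t - 2) := rfl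
@[simp] lemma Zigzag.rev_n (Z : T.Zigzag) : Z.rev.n = Z.n := rfl

section SumSide

variable {V' : Type v} [DecidableEq V'] [Nonempty V]
variable {T' : PreTriangulation V'} {F : Finset V} {F' : Finset V'} {g : V → V'}

lemma glue_g (hbij : Set.BijOn g ↑F ↑F') {v : V} (hv : v ∈ F) :
    glueMap F F' g (g v) = Sum.inl v := by
  have hgv : g v ∈ F' := by
    have := hbij.mapsTo (by exact_mod_cast hv)
    exact_mod_cast this
  rw [glueMap, dif_pos hgv]
  congr 1
  have hex : ∃ a ∈ (F : Set V), g a = g v := ⟨v, by exact_mod_cast hv, rfl⟩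
  have h1 : Function.invFunOn g ↑F (g v) ∈ (F : Set V) := Function.invFunOn_mem hex
  have h2 : g (Function.invFunOn g ↑F (g v)) = g v := Function.invFunOn_eq hex
  exact hbij.injOn h1 (by exact_mod_cast hv) h2

lemma glue_inj (hbij : Set.BijOn g ↑F ↑F') : Function.Injective (glueMap F F' g) := by
  intro a b h
  by_cases ha : a ∈ F' <;> by_cases hb : b ∈ F' <;>
    simp only [glueMap, dif_pos, dif_neg, ha, hb] at h
  · have hexa : ∃ u ∈ (F : Set V), g u = a := by
      have := hbij.surjOn (a := a) (by exact_mod_cast ha)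
      obtain ⟨u, hu, hgu⟩ := this
      exact ⟨u, hu, hgu⟩
    have hexb : ∃ u ∈ (F : Set V), g u = b := by
      have := hbij.surjOn (a := b) (by exact_mod_cast hb)
      obtain ⟨u, hu, hgu⟩ := this
      exact ⟨u, hu, hgu⟩
    have h1 := Function.invFunOn_eq hexa
    have h2 := Function.invFunOn_eq hexb
    have : Function.invFunOn g ↑F a = Function.invFunOn g ↑F b := Sum.inl.inj h
    rw [← h1, ← h2, this]
  · exact absurd h (by simp)
  · exact absurd h (by simp)
  · have := Sum.inr.inj h
    exact congrArg Subtype.val this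

variable {T : PreTriangulation V}

lemma sum_face_card (hT : T.IsTriangulation) (hT' : T'.IsTriangulation)
    (hbij : Set.BijOn g ↑F ↑F') :
    ∀ G ∈ (connectedSum T T' F F' g).faces, G.card = 3 := by
  intro G hG
  rcases (show (∃ A ∈ T.faces, A ≠ F ∧ G = A.image Sum.inl) ∨
      (∃ A ∈ T'.faces, A ≠ F' ∧ G = A.image (glueMap F F' g)) from hG) with
    ⟨A, hA, -, rfl⟩ | ⟨A, hA, -, rfl⟩
  · rw [Finset.card_image_of_injective _ Sum.inl_injective]
    exact hT.face_card A hA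
  · rw [Finset.card_image_of_injective _ (glue_inj hbij)]
    exact hT'.face_card A hA

lemma sides_ne (hT' : T'.IsTriangulation) (hF' : F' ∈ T'.faces)
    {A : Finset V} {A' : Finset V'} (hA' : A' ∈ T'.faces) (hne : A' ≠ F') :
    A.image Sum.inl ≠ A'.image (glueMap F F' g) := by
  have hw : ∃ w ∈ A', w ∉ F' := by
    by_contra hcon
    push_neg at hcon
    have hsub : A' ⊆ F' := fun w hw => hcon w hw
    have : A' = F' := Finset.eq_of_subset_of_card_le hsub
      (le_of_eq ((hT'.face_card F' hF').trans (hT'.face_card A' hA').symm))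
    exact hne this
  obtain ⟨w, hwA, hwF⟩ := hw
  intro hc
  have : glueMap F F' g w ∈ A.image Sum.inl := by
    rw [hc]; exact Finset.mem_image_of_mem _ hwA
  rw [glueMap, dif_neg hwF] at this
  simp only [Finset.mem_image] at this
  obtain ⟨u, -, hu⟩ := this
  exact Sum.inl_ne_inr hu

lemma adj_inl {a b : V} (h : T.graph.Adj a b) :
    (connectedSum T T' F F' g).graph.Adj (Sum.inl a) (Sum.inl b) :=
  show (Sum.inl a : V ⊕ {y : V' // y ∉ F'}) ≠ Sum.inl b ∧
    ((∃ x y : V, T.graph.Adj x y ∧ (Sum.inl a : V ⊕ {y : V' // y ∉ F'}) = Sum.inl x ∧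
      (Sum.inl b : V ⊕ {y : V' // y ∉ F'}) = Sum.inl y) ∨
     (∃ x y : V', T'.graph.Adj x y ∧ (Sum.inl a : V ⊕ {y : V' // y ∉ F'}) = glueMap F F' g x ∧
      (Sum.inl b : V ⊕ {y : V' // y ∉ F'}) = glueMap F F' g y)) from
  ⟨fun hc => h.ne (Sum.inl.inj hc), Or.inl ⟨a, b, h, rfl, rfl⟩⟩

lemma adj_glue (hbij : Set.BijOn g ↑F ↑F') {a b : V'} (h : T'.graph.Adj a b) :
    (connectedSum T T' F F' g).graph.Adj (glueMap F F' g a) (glueMap F F' g b) :=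
  show glueMap F F' g a ≠ glueMap F F' g b ∧
    ((∃ x y : V, T.graph.Adj x y ∧ glueMap F F' g a = Sum.inl x ∧ glueMap F F' g b = Sum.inl y) ∨
     (∃ x y : V', T'.graph.Adj x y ∧ glueMap F F' g a = glueMap F F' g x ∧
      glueMap F F' g b = glueMap F F' g y)) from
  ⟨fun hc => h.ne (glue_inj hbij hc), Or.inr ⟨a, b, h, rfl, rfl⟩⟩

end SumSide
end PreTriangulation
namespace PreTriangulation

/-- the finset contains a right-injection -/
def hasInrG {α : Type*} {β : Type*} (G : Finset (α ⊕ β)) : Prop := ∃ b, Sum.inr b ∈ G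

variable {V : Type u} {V' : Type v} [DecidableEq V] [DecidableEq V'] [Nonempty V]
variable {T : PreTriangulation V} {T' : PreTriangulation V'}
variable {F : Finset V} {F' : Finset V'} {g : V → V'}

lemma face_exists_not_mem (hT' : T'.IsTriangulation) (hF' : F' ∈ T'.faces)
    {A' : Finset V'} (hA' : A' ∈ T'.faces) (hne : A' ≠ F') : ∃ w ∈ A', w ∉ F' := by
  by_contra hcon
  push_neg at hcon
  exact hne (Finset.eq_of_subset_of_card_le (fun w hw => hcon w hw)
    (le_of_eq ((hT'.face_card F' hF').trans (hT'.face_card A' hA').symm)))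

lemma glue_cycle_exists (hT : T.IsTriangulation) (hT' : T'.IsTriangulation)
    (hF' : F' ∈ T'.faces) (hbij : Set.BijOn g ↑F ↑F')
    (Z : T.Zigzag) (W : T'.Zigzag) (a a' : ℤ) (l l' : ℕ)
    (hl : 3 ≤ l) (hl' : 3 ≤ l')
    (hfree : ∀ r : ℤ, 0 ≤ r → r ≤ (l:ℤ) - 2 → Z.face (a + r) ≠ F)
    (hfree' : ∀ r : ℤ, 0 ≤ r → r ≤ (l':ℤ) - 2 → W.face (a' + r) ≠ F')
    (hwrap1 : Z.seq (a + l - 1) = Z.seq a)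
    (hwrap2 : Z.seq (a + l) = Z.seq (a + 1))
    (hwrap1' : W.seq (a' + l' - 1) = W.seq a')
    (hwrap2' : W.seq (a' + l') = W.seq (a' + 1))
    (hg1 : glueMap F F' g (W.seq a') = Sum.inl (Z.seq a))
    (hg2 : glueMap F F' g (W.seq (a' + 1)) = Sum.inl (Z.seq (a + 1))) :
    ∃ C : (connectedSum T T' F F' g).Zigzag,
      (∀ t : ℤ, ((¬ hasInrG (C.face t) ∧ hasInrG (C.face (t+1))) ∨
                 (hasInrG (C.face t) ∧ ¬ hasInrG (C.face (t+1)))) →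
          C.seq (t+1) = Sum.inl (Z.seq a) ∧ C.seq (t+2) = Sum.inl (Z.seq (a+1))) ∧
      (∃ t : ℤ, ¬ hasInrG (C.face t) ∧ hasInrG (C.face (t+1))) ∧
      (∀ t : ℤ, C.face t = {C.seq t, C.seq (t+1), C.seq (t+2)}) := by
  classical
  obtain ⟨N, hN⟩ : ∃ N : ℕ, N = l + l' - 2 := ⟨_, rfl⟩
  have hN4 : 4 ≤ N := by omega
  have hNc : (N:ℤ) = (l:ℤ) + (l':ℤ) - 2 := by omega
  have hNz : (0:ℤ) < (N:ℤ) := by omega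
  have hρ0 : ∀ t : ℤ, 0 ≤ t % (N:ℤ) := fun t => Int.emod_nonneg t (by omega)
  have hρN : ∀ t : ℤ, t % (N:ℤ) < (N:ℤ) := fun t => Int.emod_lt_of_pos t hNz
  have hρper : ∀ t : ℤ, (t + (N:ℤ)) % (N:ℤ) = t % (N:ℤ) := by
    intro t
    conv_lhs => rw [show t + (N:ℤ) = t + (N:ℤ) * 1 by ring]
    exact Int.add_mul_emod_self_left t (N:ℤ) 1
  have hstep1 : ∀ t : ℤ, t % (N:ℤ) < (N:ℤ) - 1 → (t+1) % (N:ℤ) = t % (N:ℤ) + 1 := by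
    intro t ht
    rw [Int.add_emod]
    have h1 : (1:ℤ) % N = 1 := Int.emod_eq_of_lt (by omega) (by omega)
    rw [h1]
    exact Int.emod_eq_of_lt (by have := hρ0 t; omega) (by omega)
  have hstep2 : ∀ t : ℤ, t % (N:ℤ) = (N:ℤ) - 1 → (t+1) % (N:ℤ) = 0 := by
    intro t ht
    rw [Int.add_emod]
    have h1 : (1:ℤ) % N = 1 := Int.emod_eq_of_lt (by omega) (by omega)
    rw [h1, ht, show (N:ℤ) - 1 + 1 = N by ring]
    exact Int.emod_self
  set sq : ℤ → (V ⊕ {y : V' // y ∉ F'}) := fun t =>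
    if t % (N:ℤ) ≤ (l:ℤ) - 1 then Sum.inl (Z.seq (a + t % (N:ℤ)))
    else glueMap F F' g (W.seq (a' + t % (N:ℤ) - ((l:ℤ) - 1))) with hsq
  set fc : ℤ → Finset (V ⊕ {y : V' // y ∉ F'}) := fun t =>
    if t % (N:ℤ) ≤ (l:ℤ) - 2 then (Z.face (a + t % (N:ℤ))).image Sum.inl
    else (W.face (a' + t % (N:ℤ) - ((l:ℤ) - 1))).image (glueMap F F' g) with hfc
  -- window lemmas
  have WA : ∀ t, t % (N:ℤ) ≤ (l:ℤ) - 2 →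
      sq t = Sum.inl (Z.seq (a + t % (N:ℤ))) ∧ sq (t+1) = Sum.inl (Z.seq (a + t % (N:ℤ) + 1)) ∧
      sq (t+2) = Sum.inl (Z.seq (a + t % (N:ℤ) + 2)) := by
    intro t ht
    have hlN : (l:ℤ) < N := by omega
    have e1 : (t+1) % (N:ℤ) = t % (N:ℤ) + 1 := hstep1 t (by omega)
    have e2 : (t+2) % (N:ℤ) = t % (N:ℤ) + 2 := by
      have := hstep1 (t+1) (by omega)
      rw [e1] at this
      rw [show t + 2 = t + 1 + 1 by ring, this]; ring
    refine ⟨by rw [hsq]; dsimp only; rw [if_pos (by omega : t % (N:ℤ) ≤ (l:ℤ) - 1)], ?_, ?_⟩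
    · rw [hsq]; dsimp only
      rw [if_pos (by rw [e1]; omega : (t+1) % (N:ℤ) ≤ (l:ℤ) - 1), e1, show a + (t % (N:ℤ) + 1) = a + t % (N:ℤ) + 1 by ring]
    · rcases lt_or_eq_of_le ht with hlt | heq
      · rw [hsq]; dsimp only
        rw [if_pos (by rw [e2]; omega : (t+2) % (N:ℤ) ≤ (l:ℤ) - 1), e2,
          show a + (t % (N:ℤ) + 2) = a + t % (N:ℤ) + 2 by ring]
      · rw [hsq]; dsimp only
        rw [if_neg (by rw [e2, heq]; omega)]
        rw [e2, heq, show a' + ((l:ℤ) - 2 + 2) - ((l:ℤ) - 1) = a' + 1 by ring, hg2,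
          show a + ((l:ℤ) - 2) + 2 = a + l by ring, hwrap2]
  have WB : ∀ t, (l:ℤ) - 1 ≤ t % (N:ℤ) →
      sq t = glueMap F F' g (W.seq (a' + t % (N:ℤ) - l + 1)) ∧
      sq (t+1) = glueMap F F' g (W.seq (a' + t % (N:ℤ) - l + 2)) ∧
      sq (t+2) = glueMap F F' g (W.seq (a' + t % (N:ℤ) - l + 3)) := by
    intro t ht
    have hρn := hρN t
    refine ⟨?_, ?_, ?_⟩
    · rcases eq_or_lt_of_le ht with heq | hlt
      · rw [hsq]; dsimp only
        rw [if_pos (by omega), ← heq, show a + ((l:ℤ) - 1) = a + l - 1 by ring, hwrap1,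
          show a' + ((l:ℤ) - 1) - l + 1 = a' by ring, hg1]
      · rw [hsq]; dsimp only
        rw [if_neg (by omega), show a' + t % (N:ℤ) - ((l:ℤ) - 1) = a' + t % (N:ℤ) - l + 1 by ring]
    · rcases lt_or_eq_of_le (by have := hρN t; omega : t % (N:ℤ) ≤ (N:ℤ) - 1) with hlt | heq
      · have e1 : (t+1) % (N:ℤ) = t % (N:ℤ) + 1 := hstep1 t (by omega)
        rw [hsq]; dsimp only
        rw [if_neg (by omega), e1, show a' + (t % (N:ℤ) + 1) - ((l:ℤ) - 1) = a' + t % (N:ℤ) - l + 2 by ring]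
      · have e1 : (t+1) % (N:ℤ) = 0 := hstep2 t heq
        rw [hsq]; dsimp only
        rw [if_pos (by omega), e1, show a + (0:ℤ) = a by ring, ← hg1,
          show a' + t % (N:ℤ) - (l:ℤ) + 2 = a' + l' - 1 by omega, hwrap1']
    · rcases lt_trichotomy (t % (N:ℤ)) ((N:ℤ) - 2) with hlt | heq | hgt
      · have e1 : (t+1) % (N:ℤ) = t % (N:ℤ) + 1 := hstep1 t (by omega)
        have e2 : (t+2) % (N:ℤ) = t % (N:ℤ) + 2 := by
          have := hstep1 (t+1) (by omega)
          rw [e1] at this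
          rw [show t + 2 = t + 1 + 1 by ring, this]; ring
        rw [hsq]; dsimp only
        rw [if_neg (by omega), e2, show a' + (t % (N:ℤ) + 2) - ((l:ℤ) - 1) = a' + t % (N:ℤ) - l + 3 by ring]
      · have e1 : (t+1) % (N:ℤ) = t % (N:ℤ) + 1 := hstep1 t (by omega)
        have e2 : (t+2) % (N:ℤ) = 0 := by
          have := hstep2 (t+1) (by rw [e1]; omega)
          rw [show t + 2 = t + 1 + 1 by ring, this]
        rw [hsq]; dsimp only
        rw [if_pos (by rw [e2]; omega), e2, show a + (0:ℤ) = a by ring, ← hg1,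
          show a' + t % (N:ℤ) - (l:ℤ) + 3 = a' + l' - 1 by omega, hwrap1']
      · have heq : t % (N:ℤ) = (N:ℤ) - 1 := by omega
        have e1 : (t+1) % (N:ℤ) = 0 := hstep2 t heq
        have e2 : (t+2) % (N:ℤ) = 1 := by
          have := hstep1 (t+1) (by rw [e1]; omega)
          rw [e1] at this
          rw [show t + 2 = t + 1 + 1 by ring, this]; ring
        rw [hsq]; dsimp only
        rw [if_pos (by rw [e2]; omega), e2, show a + (1:ℤ) = a + 1 by ring, ← hg2,
          show a' + t % (N:ℤ) - (l:ℤ) + 3 = a' + l' by omega, hwrap2']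
  -- face windows
  have FA : ∀ t : ℤ, t % (N:ℤ) ≤ (l:ℤ) - 2 → fc t = (Z.face (a + t % (N:ℤ))).image Sum.inl := by
    intro t ht; rw [hfc]; dsimp only; rw [if_pos ht]
  have FB : ∀ t : ℤ, (l:ℤ) - 1 ≤ t % (N:ℤ) →
      fc t = (W.face (a' + t % (N:ℤ) - l + 1)).image (glueMap F F' g) := by
    intro t ht; rw [hfc]; dsimp only
    rw [if_neg (by omega), show a' + t % (N:ℤ) - ((l:ℤ)-1) = a' + t % (N:ℤ) - l + 1 by ring]
  have hBne : ∀ t : ℤ, (l:ℤ) - 1 ≤ t % (N:ℤ) → W.face (a' + t % (N:ℤ) - l + 1) ≠ F' := by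
    intro t ht
    have h2 := hfree' (t % (N:ℤ) - l + 1) (by have := hρ0 t; omega) (by have := hρN t; omega)
    rwa [show a' + (t % (N:ℤ) - l + 1) = a' + t % (N:ℤ) - l + 1 by ring] at h2
  have hAne : ∀ t : ℤ, t % (N:ℤ) ≤ (l:ℤ) - 2 → Z.face (a + t % (N:ℤ)) ≠ F :=
    fun t ht => hfree _ (hρ0 t) ht
  have HIA : ∀ t : ℤ, t % (N:ℤ) ≤ (l:ℤ) - 2 → ¬ hasInrG (fc t) := by
    rintro t ht ⟨b, hb⟩
    rw [FA t ht] at hb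
    simp only [Finset.mem_image] at hb
    obtain ⟨u, -, hu⟩ := hb
    exact Sum.inl_ne_inr hu
  have HIB : ∀ t : ℤ, (l:ℤ) - 1 ≤ t % (N:ℤ) → hasInrG (fc t) := by
    intro t ht
    obtain ⟨w, hwA, hwF⟩ := face_exists_not_mem hT' hF' (W.face_mem _) (hBne t ht)
    refine ⟨⟨w, hwF⟩, ?_⟩
    rw [FB t ht]
    have hgw : glueMap F F' g w = Sum.inr ⟨w, hwF⟩ := by rw [glueMap, dif_neg hwF]
    rw [← hgw]
    exact Finset.mem_image_of_mem _ hwA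
  have hmemf : ∀ t : ℤ, fc t ∈ (connectedSum T T' F F' g).faces := by
    intro t
    rcases le_or_gt (t % (N:ℤ)) ((l:ℤ)-2) with h | h
    · rw [FA t h]; exact Or.inl ⟨_, Z.face_mem _, hAne t h, rfl⟩
    · rw [FB t (by omega)]; exact Or.inr ⟨_, W.face_mem _, hBne t (by omega), rfl⟩
  have hcardf : ∀ t : ℤ, (fc t).card = 3 := fun t => sum_face_card hT hT' hbij _ (hmemf t)
  have hsubf : ∀ t : ℤ, ({sq t, sq (t+1), sq (t+2)} : Finset (V ⊕ {y : V' // y ∉ F'})) ⊆ fc t := by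
    intro t
    rcases le_or_gt (t % (N:ℤ)) ((l:ℤ)-2) with h | h
    · obtain ⟨e0, e1, e2⟩ := WA t h
      rw [FA t h, e0, e1, e2]
      intro w hw
      simp only [Finset.mem_insert, Finset.mem_singleton] at hw
      rcases hw with rfl | rfl | rfl
      · exact Finset.mem_image_of_mem _ (Z.mem_face_0 _)
      · exact Finset.mem_image_of_mem _ (Z.mem_face_1 _)
      · exact Finset.mem_image_of_mem _ (Z.mem_face_2 _)
    · obtain ⟨e0, e1, e2⟩ := WB t (by omega)
      rw [FB t (by omega), e0, e1, e2]
      intro w hw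
      simp only [Finset.mem_insert, Finset.mem_singleton] at hw
      rcases hw with rfl | rfl | rfl
      · exact Finset.mem_image_of_mem _ (W.mem_face_0 _)
      · refine Finset.mem_image_of_mem _ ?_
        have h2 := W.mem_face_1 (a' + t % (N:ℤ) - l + 1)
        rwa [show a' + t % (N:ℤ) - (l:ℤ) + 1 + 1 = a' + t % (N:ℤ) - l + 2 by ring] at h2
      · refine Finset.mem_image_of_mem _ ?_
        have h2 := W.mem_face_2 (a' + t % (N:ℤ) - l + 1)
        rwa [show a' + t % (N:ℤ) - (l:ℤ) + 1 + 2 = a' + t % (N:ℤ) - l + 3 by ring] at h2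
  have htcard : ∀ t : ℤ, ({sq t, sq (t+1), sq (t+2)} : Finset (V ⊕ {y : V' // y ∉ F'})).card = 3 := by
    intro t
    rcases le_or_gt (t % (N:ℤ)) ((l:ℤ)-2) with h | h
    · obtain ⟨e0, e1, e2⟩ := WA t h
      rw [e0, e1, e2]
      rw [Finset.card_insert_of_notMem, Finset.card_insert_of_notMem, Finset.card_singleton]
      · simp only [Finset.mem_singleton]
        exact fun hc => Z.seq_ne' (a + t % (N:ℤ)) (Sum.inl.inj hc)
      · simp only [Finset.mem_insert, Finset.mem_singleton]
        push_neg
        exact ⟨fun hc => Z.seq_ne _ (Sum.inl.inj hc),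
          fun hc => Z.seq_ne_two hT _ (Sum.inl.inj hc).symm⟩
    · obtain ⟨e0, e1, e2⟩ := WB t (by omega)
      rw [e0, e1, e2]
      rw [Finset.card_insert_of_notMem, Finset.card_insert_of_notMem, Finset.card_singleton]
      · simp only [Finset.mem_singleton]
        intro hc
        have h2 := glue_inj hbij hc
        refine W.seq_ne' (a' + t % (N:ℤ) - l + 1) ?_
        rwa [show a' + t % (N:ℤ) - (l:ℤ) + 1 + 1 = a' + t % (N:ℤ) - l + 2 by ring,
          show a' + t % (N:ℤ) - (l:ℤ) + 1 + 2 = a' + t % (N:ℤ) - l + 3 by ring]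
      · simp only [Finset.mem_insert, Finset.mem_singleton]
        push_neg
        constructor
        · intro hc
          have h2 := glue_inj hbij hc
          refine W.seq_ne (a' + t % (N:ℤ) - l + 1) ?_
          rwa [show a' + t % (N:ℤ) - (l:ℤ) + 1 + 1 = a' + t % (N:ℤ) - l + 2 by ring]
        · intro hc
          have h2 := glue_inj hbij hc
          refine W.seq_ne_two hT' (a' + t % (N:ℤ) - l + 1) ?_
          rw [show a' + t % (N:ℤ) - (l:ℤ) + 1 + 2 = a' + t % (N:ℤ) - l + 3 by ring]
          exact h2.symm
  have P1 : ∀ t : ℤ, fc t = {sq t, sq (t+1), sq (t+2)} := by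
    intro t
    refine (Finset.eq_of_subset_of_card_le (hsubf t) ?_).symm
    rw [hcardf t, htcard t]
  have hsper : ∀ t : ℤ, sq (t + (N:ℤ)) = sq t := by
    intro t
    rw [hsq]; dsimp only
    rw [hρper t]
  have hsne : ∀ t : ℤ, sq t ≠ sq (t+1) := by
    intro t
    rcases le_or_gt (t % (N:ℤ)) ((l:ℤ)-2) with h | h
    · obtain ⟨e0, e1, -⟩ := WA t h
      rw [e0, e1]
      exact fun hc => Z.seq_ne (a + t % (N:ℤ)) (Sum.inl.inj hc)
    · obtain ⟨e0, e1, -⟩ := WB t (by omega)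
      rw [e0, e1]
      intro hc
      refine W.seq_ne (a' + t % (N:ℤ) - l + 1) ?_
      have h2 := glue_inj hbij hc
      rwa [show a' + t % (N:ℤ) - (l:ℤ) + 1 + 1 = a' + t % (N:ℤ) - l + 2 by ring]
  have hsadj : ∀ t : ℤ, (connectedSum T T' F F' g).graph.Adj (sq t) (sq (t+1)) := by
    intro t
    rcases le_or_gt (t % (N:ℤ)) ((l:ℤ)-2) with h | h
    · obtain ⟨e0, e1, -⟩ := WA t h
      rw [e0, e1]
      exact adj_inl (Z.seq_adj (a + t % (N:ℤ)))
    · obtain ⟨e0, e1, -⟩ := WB t (by omega)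
      rw [e0, e1, show a' + t % (N:ℤ) - (l:ℤ) + 2 = (a' + t % (N:ℤ) - l + 1) + 1 by ring]
      exact adj_glue hbij (W.seq_adj (a' + t % (N:ℤ) - l + 1))
  have hfne : ∀ t : ℤ, fc t ≠ fc (t+1) := by
    intro t
    rcases le_or_gt (t % (N:ℤ)) ((l:ℤ)-2) with h | h
    · rcases lt_or_eq_of_le h with hlt | heq
      · have e1 := hstep1 t (by omega)
        rw [FA t h, FA (t+1) (by rw [e1]; omega)]
        intro hc
        have h2 := Finset.image_injective Sum.inl_injective hc
        refine Z.face_ne (a + t % (N:ℤ)) ?_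
        rwa [e1, show a + (t % (N:ℤ) + 1) = a + t % (N:ℤ) + 1 by ring] at h2
      · have e1 := hstep1 t (by omega)
        rw [FA t h, FB (t+1) (by rw [e1]; omega)]
        exact sides_ne hT' hF' (W.face_mem _) (hBne (t+1) (by rw [e1]; omega))
    · rcases lt_or_eq_of_le (by have := hρN t; omega : t % (N:ℤ) ≤ (N:ℤ) - 1) with hlt | heq
      · have e1 := hstep1 t (by omega)
        rw [FB t (by omega), FB (t+1) (by rw [e1]; omega)]
        intro hc
        have h2 := Finset.image_injective (glue_inj hbij) hc
        refine W.face_ne (a' + t % (N:ℤ) - l + 1) ?_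
        rwa [e1, show a' + (t % (N:ℤ) + 1) - (l:ℤ) + 1 = a' + t % (N:ℤ) - l + 1 + 1 by ring] at h2
      · have e1 : (t+1) % (N:ℤ) = 0 := hstep2 t heq
        rw [FB t (by omega), FA (t+1) (by rw [e1]; omega)]
        exact (sides_ne hT' hF' (W.face_mem _) (hBne t (by omega))).symm
  have hmin : ∀ m : ℕ, 0 < m → (∀ t : ℤ, sq (t + (m:ℤ)) = sq t) → N ≤ m := by
    intro m hm hper
    by_contra hcon
    push_neg at hcon
    have hfper : ∀ t, fc (t + (m:ℤ)) = fc t := by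
      intro t
      rw [P1, P1]
      have s0 := hper t
      have s1 := hper (t+1)
      have s2 := hper (t+2)
      rw [show t + 1 + (m:ℤ) = t + (m:ℤ) + 1 by ring] at s1
      rw [show t + 2 + (m:ℤ) = t + (m:ℤ) + 2 by ring] at s2
      rw [s0, s1, s2]
    have hfperN : ∀ t, fc (t + (N:ℤ)) = fc t := by
      intro t
      rw [P1, P1]
      have s0 := hsper t
      have s1 := hsper (t+1)
      have s2 := hsper (t+2)
      rw [show t + 1 + (N:ℤ) = t + (N:ℤ) + 1 by ring] at s1
      rw [show t + 2 + (N:ℤ) = t + (N:ℤ) + 2 by ring] at s2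
      rw [s0, s1, s2]
    have hIter : ∀ (c : ℤ), (∀ t, fc (t + c) = fc t) → ∀ (k : ℤ) (t : ℤ), fc (t + c * k) = fc t := by
      intro c hc k
      induction k using Int.induction_on with
      | zero => intro t; simp
      | succ k ih =>
        intro t
        rw [show t + c * ((k:ℤ)+1) = t + c * (k:ℤ) + c by ring, hc (t + c * (k:ℤ))]
        exact ih t
      | pred k ih =>
        intro t
        have h1 := hc (t + c * (-(k:ℤ) - 1))
        rw [show t + c * (-(k:ℤ) - 1) + c = t + c * (-(k:ℤ)) by ring] at h1
        rw [show t + c * (-(k:ℤ) - 1) = t + c * (-(k:ℤ) - 1) by ring, ← h1]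
        exact ih t
    have hd1 : 0 < Nat.gcd m N := Nat.gcd_pos_of_pos_left _ hm
    have hdm : Nat.gcd m N ∣ m := Nat.gcd_dvd_left m N
    have hdN : Nat.gcd m N ∣ N := Nat.gcd_dvd_right m N
    have hdmle : Nat.gcd m N ≤ m := Nat.le_of_dvd hm hdm
    have hdlem : ((Nat.gcd m N : ℕ) : ℤ) = (m:ℤ) * Int.gcdA m N + (N:ℤ) * Int.gcdB m N := by
      have h2 := Int.gcd_eq_gcd_ab (m:ℤ) (N:ℤ)
      rwa [Int.gcd_natCast_natCast] at h2
    have hdper : ∀ t, fc (t + ((Nat.gcd m N : ℕ) : ℤ)) = fc t := by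
      intro t
      have h1 := hIter (m:ℤ) hfper (Int.gcdA m N) t
      have h2 := hIter (N:ℤ) hfperN (Int.gcdB m N) (t + (m:ℤ) * Int.gcdA m N)
      have e : t + ((Nat.gcd m N : ℕ) : ℤ) = t + (m:ℤ) * Int.gcdA m N + (N:ℤ) * Int.gcdB m N := by
        rw [hdlem]; ring
      rw [e, h2, h1]
    have hv1 : ((l:ℤ) - 2) % (N:ℤ) = (l:ℤ) - 2 := Int.emod_eq_of_lt (by omega) (by omega)
    have hvN : ((N:ℤ) - 1) % (N:ℤ) = (N:ℤ) - 1 := Int.emod_eq_of_lt (by omega) (by omega)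
    have hnoInr1 : ¬ hasInrG (fc ((l:ℤ) - 2)) := HIA _ (by rw [hv1])
    have hInrN : hasInrG (fc ((N:ℤ) - 1)) := HIB _ (by rw [hvN]; omega)
    have hdl' : (l':ℤ) ≤ ((Nat.gcd m N : ℕ) : ℤ) := by
      by_contra hcon2
      push_neg at hcon2
      have hin : ((l:ℤ) - 2 + ((Nat.gcd m N : ℕ) : ℤ)) % (N:ℤ) = (l:ℤ) - 2 + (Nat.gcd m N : ℕ) :=
        Int.emod_eq_of_lt (by omega) (by omega)
      have h2 := HIB ((l:ℤ) - 2 + (Nat.gcd m N : ℕ)) (by rw [hin]; omega)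
      rw [hdper ((l:ℤ) - 2)] at h2
      exact hnoInr1 h2
    have hdl : (l:ℤ) ≤ ((Nat.gcd m N : ℕ) : ℤ) := by
      by_contra hcon2
      push_neg at hcon2
      have hin : ((N:ℤ) - 1 + ((Nat.gcd m N : ℕ) : ℤ)) % (N:ℤ) = ((Nat.gcd m N : ℕ) : ℤ) - 1 := by
        conv_lhs => rw [show (N:ℤ) - 1 + ((Nat.gcd m N : ℕ) : ℤ)
          = (((Nat.gcd m N : ℕ) : ℤ) - 1) + (N:ℤ) * 1 by ring]
        rw [Int.add_mul_emod_self_left]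
        exact Int.emod_eq_of_lt (by omega) (by omega)
      have h2 := HIA ((N:ℤ) - 1 + ((Nat.gcd m N : ℕ) : ℤ)) (by rw [hin]; omega)
      rw [hdper ((N:ℤ) - 1)] at h2
      exact h2 hInrN
    have h2d : N + 2 ≤ 2 * Nat.gcd m N := by
      have hc1 : l ≤ Nat.gcd m N := by exact_mod_cast hdl
      have hc2 : l' ≤ Nat.gcd m N := by exact_mod_cast hdl'
      omega
    obtain ⟨k, hk⟩ := hdN
    rcases Nat.lt_or_ge k 2 with hk2 | hk2
    · interval_cases k <;> omega
    · have h3 := Nat.mul_le_mul_left (Nat.gcd m N) hk2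
      omega
  have hufc : ∀ t : ℤ, ∀ G ∈ (connectedSum T T' F F' g).faces,
      ({sq t, sq (t+1), sq (t+2)} : Finset (V ⊕ {y : V' // y ∉ F'})) ⊆ G → G = fc t := by
    intro t G hG hsub
    have h1 : ({sq t, sq (t+1), sq (t+2)} : Finset (V ⊕ {y : V' // y ∉ F'})) = G :=
      Finset.eq_of_subset_of_card_le hsub
        (by rw [sum_face_card hT hT' hbij G hG, htcard t])
    exact h1.symm.trans (P1 t).symm
  have h3N : 3 < N := by omega
  refine ⟨{ n := N
            three_lt_n := h3N
            seq := sq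
            periodic := hsper
            n_minimal := hmin
            seq_ne := hsne
            seq_adj := hsadj
            face := fc
            face_mem := hmemf
            subset_face := hsubf
            face_unique := hufc
            face_ne := hfne }, ?_, ?_, ?_⟩
  · -- transition property
    intro t hcross
    show sq (t+1) = Sum.inl (Z.seq a) ∧ sq (t+2) = Sum.inl (Z.seq (a+1))
    have hcross' : (¬ hasInrG (fc t) ∧ hasInrG (fc (t+1))) ∨
        (hasInrG (fc t) ∧ ¬ hasInrG (fc (t+1))) := hcross
    rcases le_or_gt (t % (N:ℤ)) ((l:ℤ)-2) with h | h
    · rcases lt_or_eq_of_le h with hlt | heq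
      · exfalso
        have e1 := hstep1 t (by omega)
        rcases hcross' with ⟨-, h2'⟩ | ⟨h1', -⟩
        · exact HIA (t+1) (by rw [e1]; omega) h2'
        · exact HIA t h h1'
      · obtain ⟨e0, e1, e2⟩ := WA t h
        constructor
        · rw [e1, heq, show a + ((l:ℤ)-2) + 1 = a + l - 1 by ring, hwrap1]
        · rw [e2, heq, show a + ((l:ℤ)-2) + 2 = a + l by ring, hwrap2]
    · rcases lt_or_eq_of_le (by have := hρN t; omega : t % (N:ℤ) ≤ (N:ℤ) - 1) with hlt | heq
      · exfalso
        have e1 := hstep1 t (by omega)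
        have hB1 := HIB t (by omega)
        have hB2 := HIB (t+1) (by rw [e1]; omega)
        rcases hcross' with ⟨h1', -⟩ | ⟨-, h2'⟩
        · exact h1' hB1
        · exact h2' hB2
      · have e1 : (t+1) % (N:ℤ) = 0 := hstep2 t heq
        have e2 : (t+2) % (N:ℤ) = 1 := by
          have h3 := hstep1 (t+1) (by rw [e1]; omega)
          rw [e1] at h3
          rw [show t + 2 = t + 1 + 1 by ring, h3]
          norm_num
        constructor
        · rw [hsq]; dsimp only
          rw [if_pos (by rw [e1]; omega), e1, show a + (0:ℤ) = a by ring]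
        · rw [hsq]; dsimp only
          rw [if_pos (by rw [e2]; omega), e2, show a + (1:ℤ) = a + 1 by ring]
  · -- existence of a transition
    refine ⟨(l:ℤ) - 2, ?_, ?_⟩
    · show ¬ hasInrG (fc ((l:ℤ)-2))
      exact HIA _ (by rw [Int.emod_eq_of_lt (by omega) (by omega)])
    · show hasInrG (fc ((l:ℤ)-2+1))
      refine HIB _ ?_
      rw [show (l:ℤ)-2+1 = (l:ℤ)-1 by ring, Int.emod_eq_of_lt (by omega) (by omega)]
  · exact P1

end PreTriangulation
namespace PreTriangulation

variable {V' : Type v} [DecidableEq V'] {T' : PreTriangulation V'}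

lemma ports (hT' : T'.IsTriangulation) (Z' : T'.Zigzag) {x' y' z' : V'} {F' : Finset V'}
    (hF : F' = {x', y', z'}) (hxy : x' ≠ y') (hxz : x' ≠ z') (hyz : y' ≠ z')
    {i' : ℤ} {p' q' : ℕ} (hp : 0 < p') (hpq : p' < q') (hqn : q' < Z'.n)
    (h1 : Z'.TripleAt i' x' y' z') (h2 : Z'.TripleAt (i' + p') y' z' x')
    (h3 : Z'.TripleAt (i' + q') z' x' y')
    (u' w' : V') (hu : u' ∈ F') (hw : w' ∈ F') (huw : u' ≠ w') :
    ∃ (W : T'.Zigzag) (a' : ℤ) (l' : ℕ), 3 ≤ l' ∧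
      (∀ r : ℤ, 0 ≤ r → r ≤ (l':ℤ) - 2 → W.face (a' + r) ≠ F') ∧
      W.seq (a' + l' - 1) = W.seq a' ∧ W.seq (a' + l') = W.seq (a' + 1) ∧
      W.seq a' = u' ∧ W.seq (a' + 1) = w' := by
  have g1 := Z'.gap1 hT' hF hxy hxz hyz hp hpq hqn h1 h2 h3
  have g2 := Z'.gap2 hT' hF hxy hxz hyz hp hpq hqn h1 h2 h3
  have g3 := Z'.gap3 hT' hF hxy hxz hyz hp hpq hqn h1 h2 h3
  have nv := Z'.not_visit hT' hF hxy hxz hyz hp hpq hqn h1 h2 h3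
  have hpn : p' < Z'.n := lt_trans hpq hqn
  rw [hF] at hu hw
  simp only [Finset.mem_insert, Finset.mem_singleton] at hu hw
  rcases hu with rfl | rfl | rfl <;> rcases hw with rfl | rfl | rfl
  · exact absurd rfl huw
  · -- (x', y') : forward, a' = i'+q'+1, l' = n'-q'
    refine ⟨Z', i' + q' + 1, Z'.n - q', by omega, ?_, ?_, ?_, ?_, ?_⟩
    · intro r h0 hr
      have h := nv (q' + 1 + r) (by omega) (by omega) (by omega) (by omega)
      rwa [show i' + ((q':ℤ) + 1 + r) = i' + q' + 1 + r by ring] at h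
    · rw [show i' + (q':ℤ) + 1 + ((Z'.n - q' : ℕ):ℤ) - 1 = i' + (Z'.n:ℤ) by omega]
      have hper := Z'.periodic i'
      rw [hper, h1.1]
      rw [show i' + (q':ℤ) + 1 = (i' + (q':ℤ)) + 1 by ring, h3.2.1]
    · rw [show i' + (q':ℤ) + 1 + ((Z'.n - q' : ℕ):ℤ) = i' + 1 + (Z'.n:ℤ) by omega]
      have hper := Z'.periodic (i' + 1)
      rw [hper, h1.2.1]
      rw [show i' + (q':ℤ) + 1 + 1 = (i' + (q':ℤ)) + 2 by ring, h3.2.2]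
    · rw [show i' + (q':ℤ) + 1 = (i' + (q':ℤ)) + 1 by ring]; exact h3.2.1
    · rw [show i' + (q':ℤ) + 1 + 1 = (i' + (q':ℤ)) + 2 by ring]; exact h3.2.2
  · -- (x', z') : reversed, a' = -(i'+q')-1, l' = q'-p'
    refine ⟨Z'.rev, -(i' + q') - 1, q' - p', by omega, ?_, ?_, ?_, ?_, ?_⟩
    · intro r h0 hr
      rw [Zigzag.rev_face]
      have h := nv ((q':ℤ) - 1 - r) (by omega) (by omega) (by omega) (by omega)
      rwa [show i' + ((q':ℤ) - 1 - r) = -(-(i' + (q':ℤ)) - 1 + r) - 2 by ring] at h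
    · rw [Zigzag.rev_seq, Zigzag.rev_seq]
      rw [show -(-(i' + (q':ℤ)) - 1 + ((q' - p' : ℕ):ℤ) - 1) = (i' + (p':ℤ)) + 2 by omega,
        show -(-(i' + (q':ℤ)) - 1) = (i' + (q':ℤ)) + 1 by ring, h2.2.2, h3.2.1]
    · rw [Zigzag.rev_seq, Zigzag.rev_seq]
      rw [show -(-(i' + (q':ℤ)) - 1 + ((q' - p' : ℕ):ℤ)) = (i' + (p':ℤ)) + 1 by omega,
        show -(-(i' + (q':ℤ)) - 1 + 1) = i' + (q':ℤ) by ring, h2.2.1, h3.1]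
    · rw [Zigzag.rev_seq, show -(-(i' + (q':ℤ)) - 1) = (i' + (q':ℤ)) + 1 by ring]
      exact h3.2.1
    · rw [Zigzag.rev_seq, show -(-(i' + (q':ℤ)) - 1 + 1) = i' + (q':ℤ) by ring]
      exact h3.1
  · -- (y', x') : reversed, a' = -(i'+n')-1, l' = n'-q'
    refine ⟨Z'.rev, -(i' + (Z'.n:ℤ)) - 1, Z'.n - q', by omega, ?_, ?_, ?_, ?_, ?_⟩
    · intro r h0 hr
      rw [Zigzag.rev_face]
      have h := nv ((Z'.n:ℤ) - 1 - r) (by omega) (by omega) (by omega) (by omega)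
      rwa [show i' + ((Z'.n:ℤ) - 1 - r) = -(-(i' + (Z'.n:ℤ)) - 1 + r) - 2 by ring] at h
    · rw [Zigzag.rev_seq, Zigzag.rev_seq]
      rw [show -(-(i' + (Z'.n:ℤ)) - 1 + ((Z'.n - q' : ℕ):ℤ) - 1) = (i' + (q':ℤ)) + 2 by omega,
        show -(-(i' + (Z'.n:ℤ)) - 1) = i' + (Z'.n:ℤ) + 1 by ring, h3.2.2]
      have hper := Z'.periodic (i' + 1)
      rw [show i' + (Z'.n:ℤ) + 1 = i' + 1 + (Z'.n:ℤ) by ring, hper, h1.2.1]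
    · rw [Zigzag.rev_seq, Zigzag.rev_seq]
      rw [show -(-(i' + (Z'.n:ℤ)) - 1 + ((Z'.n - q' : ℕ):ℤ)) = (i' + (q':ℤ)) + 1 by omega,
        show -(-(i' + (Z'.n:ℤ)) - 1 + 1) = i' + (Z'.n:ℤ) by ring, h3.2.1]
      have hper := Z'.periodic i'
      rw [hper, h1.1]
    · rw [Zigzag.rev_seq, show -(-(i' + (Z'.n:ℤ)) - 1) = i' + 1 + (Z'.n:ℤ) by ring,
        Z'.periodic (i' + 1), h1.2.1]
    · rw [Zigzag.rev_seq, show -(-(i' + (Z'.n:ℤ)) - 1 + 1) = i' + (Z'.n:ℤ) by ring,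
        Z'.periodic i', h1.1]
  · exact absurd rfl huw
  · -- (y', z') : forward, a' = i'+1, l' = p'
    refine ⟨Z', i' + 1, p', g1, ?_, ?_, ?_, ?_, ?_⟩
    · intro r h0 hr
      have h := nv (1 + r) (by omega) (by omega) (by omega) (by omega)
      rwa [show i' + (1 + r) = i' + 1 + r by ring] at h
    · rw [show i' + 1 + (p':ℤ) - 1 = i' + (p':ℤ) by ring, h2.1, h1.2.1]
    · rw [show i' + 1 + (p':ℤ) = (i' + (p':ℤ)) + 1 by ring, h2.2.1,
        show i' + 1 + 1 = i' + 2 by ring, h1.2.2]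
    · exact h1.2.1
    · rw [show i' + 1 + 1 = i' + 2 by ring]; exact h1.2.2
  · -- (z', x') : forward, a' = i'+p'+1, l' = q'-p'
    refine ⟨Z', i' + p' + 1, q' - p', by omega, ?_, ?_, ?_, ?_, ?_⟩
    · intro r h0 hr
      have h := nv ((p':ℤ) + 1 + r) (by omega) (by omega) (by omega) (by omega)
      rwa [show i' + ((p':ℤ) + 1 + r) = i' + p' + 1 + r by ring] at h
    · rw [show i' + (p':ℤ) + 1 + ((q' - p' : ℕ):ℤ) - 1 = i' + (q':ℤ) by omega, h3.1,
        show i' + (p':ℤ) + 1 = (i' + (p':ℤ)) + 1 by ring, h2.2.1]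
    · rw [show i' + (p':ℤ) + 1 + ((q' - p' : ℕ):ℤ) = (i' + (q':ℤ)) + 1 by omega, h3.2.1,
        show i' + (p':ℤ) + 1 + 1 = (i' + (p':ℤ)) + 2 by ring, h2.2.2]
    · rw [show i' + (p':ℤ) + 1 = (i' + (p':ℤ)) + 1 by ring]; exact h2.2.1
    · rw [show i' + (p':ℤ) + 1 + 1 = (i' + (p':ℤ)) + 2 by ring]; exact h2.2.2
  · -- (z', y') : reversed, a' = -(i'+p')-1, l' = p'
    refine ⟨Z'.rev, -(i' + (p':ℤ)) - 1, p', g1, ?_, ?_, ?_, ?_, ?_⟩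
    · intro r h0 hr
      rw [Zigzag.rev_face]
      have h := nv ((p':ℤ) - 1 - r) (by omega) (by omega) (by omega) (by omega)
      rwa [show i' + ((p':ℤ) - 1 - r) = -(-(i' + (p':ℤ)) - 1 + r) - 2 by ring] at h
    · rw [Zigzag.rev_seq, Zigzag.rev_seq]
      rw [show -(-(i' + (p':ℤ)) - 1 + (p':ℤ) - 1) = i' + 2 by ring, h1.2.2,
        show -(-(i' + (p':ℤ)) - 1) = (i' + (p':ℤ)) + 1 by ring, h2.2.1]
    · rw [Zigzag.rev_seq, Zigzag.rev_seq]
      rw [show -(-(i' + (p':ℤ)) - 1 + (p':ℤ)) = i' + 1 by ring, h1.2.1,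
        show -(-(i' + (p':ℤ)) - 1 + 1) = i' + (p':ℤ) by ring, h2.1]
    · rw [Zigzag.rev_seq, show -(-(i' + (p':ℤ)) - 1) = (i' + (p':ℤ)) + 1 by ring]
      exact h2.2.1
    · rw [Zigzag.rev_seq, show -(-(i' + (p':ℤ)) - 1 + 1) = i' + (p':ℤ) by ring]
      exact h2.1
  · exact absurd rfl huw

end PreTriangulation
open PreTriangulation

theorem statement_16 {V : Type u} {V' : Type v} [DecidableEq V] [DecidableEq V'] [Nonempty V]
    (T : PreTriangulation V) (T' : PreTriangulation V')
    (hT : T.IsTriangulation) (hT' : T'.IsTriangulation)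
    (hzT : T.ZKnotted) (hzT' : T'.ZKnotted)
    (F : Finset V) (hF : F ∈ T.faces) (F' : Finset V') (hF' : F' ∈ T'.faces)
    (Z : T.Zigzag) (Z' : T'.Zigzag)
    (h222 : Z.Is222SecondFace F) (h222' : Z'.Is222SecondFace F') :
    ∀ g : V → V', Set.BijOn g ↑F ↑F' → ¬ (connectedSum T T' F F' g).ZKnotted := by
  intro g hbij hzk
  obtain ⟨-, huniq⟩ := hzk
  obtain ⟨x, y, z, hFxyz, hxy, hxz, hyz, -, -, -, hcyc⟩ := h222
  obtain ⟨i, p, q, hp, hpq, hqn, h1, h2, h3⟩ := hcyc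
  obtain ⟨x', y', z', hFxyz', hxy', hxz', hyz', -, -, -, hcyc'⟩ := h222'
  obtain ⟨i', p', q', hp', hpq', hqn', h1', h2', h3'⟩ := hcyc'
  have g1 := Z.gap1 hT hFxyz hxy hxz hyz hp hpq hqn h1 h2 h3
  have g2 := Z.gap2 hT hFxyz hxy hxz hyz hp hpq hqn h1 h2 h3
  have nv := Z.not_visit hT hFxyz hxy hxz hyz hp hpq hqn h1 h2 h3
  have hyF : y ∈ F := by rw [hFxyz]; simp
  have hzF : z ∈ F := by rw [hFxyz]; simp
  have hxF : x ∈ F := by rw [hFxyz]; simp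
  have hgy : g y ∈ F' := by
    have := hbij.mapsTo (show y ∈ (↑F : Set V) by exact_mod_cast hyF)
    exact_mod_cast this
  have hgz : g z ∈ F' := by
    have := hbij.mapsTo (show z ∈ (↑F : Set V) by exact_mod_cast hzF)
    exact_mod_cast this
  have hgx : g x ∈ F' := by
    have := hbij.mapsTo (show x ∈ (↑F : Set V) by exact_mod_cast hxF)
    exact_mod_cast this
  have hgyz : g y ≠ g z := fun hc =>
    hyz (hbij.injOn (by exact_mod_cast hyF) (by exact_mod_cast hzF) hc)
  have hgzx : g z ≠ g x := fun hc =>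
    (fun h => hxz h.symm) (hbij.injOn (by exact_mod_cast hzF) (by exact_mod_cast hxF) hc)
  -- first glued cycle (ports (y,z))
  obtain ⟨W1, a1, l1, hl1, hfr1, hwa1, hwb1, hs1, hs1'⟩ :=
    ports hT' Z' hFxyz' hxy' hxz' hyz' hp' hpq' hqn' h1' h2' h3' (g y) (g z) hgy hgz hgyz
  have hfreeA : ∀ r : ℤ, 0 ≤ r → r ≤ (p:ℤ) - 2 → Z.face (i + 1 + r) ≠ F := by
    intro r h0 hr
    have h := nv (1 + r) (by omega) (by omega) (by omega) (by omega)
    rwa [show i + (1 + r) = i + 1 + r by ring] at h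
  have hwrapA1 : Z.seq (i + 1 + (p:ℤ) - 1) = Z.seq (i + 1) := by
    rw [show i + 1 + (p:ℤ) - 1 = i + (p:ℤ) by ring, h2.1, h1.2.1]
  have hwrapA2 : Z.seq (i + 1 + (p:ℤ)) = Z.seq (i + 1 + 1) := by
    rw [show i + 1 + (p:ℤ) = (i + (p:ℤ)) + 1 by ring, h2.2.1,
      show i + 1 + 1 = i + 2 by ring, h1.2.2]
  have hgA1 : glueMap F F' g (W1.seq a1) = Sum.inl (Z.seq (i + 1)) := by
    rw [hs1, h1.2.1]; exact glue_g hbij hyF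
  have hgA2 : glueMap F F' g (W1.seq (a1 + 1)) = Sum.inl (Z.seq (i + 1 + 1)) := by
    rw [hs1', show i + 1 + 1 = i + 2 by ring, h1.2.2]; exact glue_g hbij hzF
  obtain ⟨C1, hP2_1, hP3_1, hP1_1⟩ := glue_cycle_exists hT hT' hF' hbij Z W1 (i + 1) a1 p l1
    g1 hl1 hfreeA hfr1 hwrapA1 hwrapA2 hwa1 hwb1 hgA1 hgA2
  -- second glued cycle (ports (z,x))
  obtain ⟨W2, a2, l2, hl2, hfr2, hwa2, hwb2, hs2, hs2'⟩ :=
    ports hT' Z' hFxyz' hxy' hxz' hyz' hp' hpq' hqn' h1' h2' h3' (g z) (g x) hgz hgx hgzx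
  have hfreeB : ∀ r : ℤ, 0 ≤ r → r ≤ ((q - p : ℕ):ℤ) - 2 → Z.face (i + p + 1 + r) ≠ F := by
    intro r h0 hr
    have h := nv ((p:ℤ) + 1 + r) (by omega) (by omega) (by omega) (by omega)
    rwa [show i + ((p:ℤ) + 1 + r) = i + p + 1 + r by ring] at h
  have hwrapB1 : Z.seq (i + (p:ℤ) + 1 + ((q - p : ℕ):ℤ) - 1) = Z.seq (i + (p:ℤ) + 1) := by
    rw [show i + (p:ℤ) + 1 + ((q - p : ℕ):ℤ) - 1 = i + (q:ℤ) by omega, h3.1,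
      show i + (p:ℤ) + 1 = (i + (p:ℤ)) + 1 by ring, h2.2.1]
  have hwrapB2 : Z.seq (i + (p:ℤ) + 1 + ((q - p : ℕ):ℤ)) = Z.seq (i + (p:ℤ) + 1 + 1) := by
    rw [show i + (p:ℤ) + 1 + ((q - p : ℕ):ℤ) = (i + (q:ℤ)) + 1 by omega, h3.2.1,
      show i + (p:ℤ) + 1 + 1 = (i + (p:ℤ)) + 2 by ring, h2.2.2]
  have hgB1 : glueMap F F' g (W2.seq a2) = Sum.inl (Z.seq (i + (p:ℤ) + 1)) := by
    rw [hs2, show i + (p:ℤ) + 1 = (i + (p:ℤ)) + 1 by ring, h2.2.1]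
    exact glue_g hbij hzF
  have hgB2 : glueMap F F' g (W2.seq (a2 + 1)) = Sum.inl (Z.seq (i + (p:ℤ) + 1 + 1)) := by
    rw [hs2', show i + (p:ℤ) + 1 + 1 = (i + (p:ℤ)) + 2 by ring, h2.2.2]
    exact glue_g hbij hxF
  obtain ⟨C2, hP2_2, hP3_2, hP1_2⟩ := glue_cycle_exists hT hT' hF' hbij Z W2 (i + (p:ℤ) + 1)
    a2 (q - p) l2 (by omega) hl2 hfreeB hfr2 hwrapB1 hwrapB2 hwa2 hwb2 hgB1 hgB2
  -- the two cycles cannot be equivalent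
  obtain ⟨t0, hA, hB⟩ := hP3_2
  have hT2 := hP2_2 t0 (Or.inl ⟨hA, hB⟩)
  rcases huniq C1 C2 with ⟨k, hk⟩ | ⟨k, hk⟩
  · -- shift case
    have hface : ∀ t : ℤ, C2.face t = C1.face (t + k) := by
      intro t
      rw [hP1_2 t, hP1_1 (t + k), hk t, hk (t + 1), hk (t + 2),
        show t + 1 + k = t + k + 1 by ring, show t + 2 + k = t + k + 2 by ring]
    have hA1 : ¬ hasInrG (C1.face (t0 + k)) := by rw [← hface]; exact hA
    have hB1 : hasInrG (C1.face (t0 + k + 1)) := by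
      rw [show t0 + k + 1 = (t0 + 1) + k by ring, ← hface]; exact hB
    have hT1 := hP2_1 (t0 + k) (Or.inl ⟨hA1, hB1⟩)
    have heq : C2.seq (t0 + 1) = C1.seq (t0 + k + 1) := by
      rw [hk (t0 + 1), show t0 + 1 + k = t0 + k + 1 by ring]
    rw [hT2.1, hT1.1] at heq
    have : Z.seq (i + (p:ℤ) + 1) = Z.seq (i + 1) := Sum.inl.inj heq
    rw [show i + (p:ℤ) + 1 = (i + (p:ℤ)) + 1 by ring, h2.2.1, h1.2.1] at this
    exact hyz this.symm
  · -- reversal case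
    have hface : ∀ t : ℤ, C2.face t = C1.face (k - t - 2) := by
      intro t
      have e0 : C2.seq t = C1.seq (k - t) := hk t
      have e1 : C2.seq (t+1) = C1.seq (k - t - 1) := by
        rw [hk (t+1), show k - (t+1) = k - t - 1 by ring]
      have e2 : C2.seq (t+2) = C1.seq (k - t - 2) := by
        rw [hk (t+2), show k - (t+2) = k - t - 2 by ring]
      have f1 : C1.face (k - t - 2) = {C1.seq (k-t-2), C1.seq (k-t-1), C1.seq (k-t)} := by
        have hq := hP1_1 (k - t - 2)
        rwa [show k - t - 2 + 1 = k - t - 1 by ring, show k - t - 2 + 2 = k - t by ring] at hq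
      rw [hP1_2 t, e0, e1, e2, f1]
      exact triple_rev (C1.seq (k-t-2)) (C1.seq (k-t-1)) (C1.seq (k-t))
    have hB1 : hasInrG (C1.face (k - t0 - 3)) := by
      have := hB
      rw [hface (t0 + 1), show k - (t0 + 1) - 2 = k - t0 - 3 by ring] at this
      exact this
    have hA1 : ¬ hasInrG (C1.face (k - t0 - 3 + 1)) := by
      rw [show k - t0 - 3 + 1 = k - t0 - 2 by ring]
      have := hA
      rw [hface t0] at this
      exact this
    have hT1 := hP2_1 (k - t0 - 3) (Or.inr ⟨hB1, hA1⟩)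
    have heq : C2.seq (t0 + 2) = C1.seq (k - t0 - 3 + 1) := by
      rw [hk (t0 + 2), show k - (t0 + 2) = k - t0 - 3 + 1 by ring]
    rw [hT2.2, hT1.1] at heq
    have : Z.seq (i + (p:ℤ) + 1 + 1) = Z.seq (i + 1) := Sum.inl.inj heq
    rw [show i + (p:ℤ) + 1 + 1 = (i + (p:ℤ)) + 2 by ring, h2.2.2, h1.2.1] at this
    exact hxy this
end
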